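/- arXiv:2010.03054 — 14 statements merged into one kernel-verified Lean document; each statement's English description precedes it below -/
import Mathlib

section
/- Let S be a G-graded ring and M a graded left S-module. Then S(M) := ⊕_{g∈G} (S_g S_{g⁻¹}) M_g is a graded submodule of M; that is, S(M) ∩ M_h = (S_h S_{h⁻¹}) M_h for every h ∈ G. -/
open Pointwise

section Defs

variable {G : Type} [AddGroup G] [DecidableEq G]
variable {A : Type} [Ring A]
variable {M : Type} [AddCommGroup M] [Module A M]

/-- The additive subgroup of `M` consisting of finite sums of products `a • m`
with `a ∈ S` and `m ∈ N`. -/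
def prodSMul (S : AddSubgroup A) (N : AddSubgroup M) : AddSubgroup M where
  __ := S.toAddSubmonoid • N.toAddSubmonoid
  neg_mem' {x} hx := by
    refine AddSubmonoid.smul_induction_on hx (fun a ha m hm => ?_) (fun x y hx hy => ?_)
    · rw [show -(a • m) = (-a) • m by rw [neg_smul]]
      exact AddSubmonoid.smul_mem_smul (S.neg_mem ha) hm
    · rw [neg_add]
      exact (S.toAddSubmonoid • N.toAddSubmonoid).add_mem hx hy

/-- A (possibly non-unital) ring, here an additive subgroup of `A` closed under
multiplication, is *s-unital* if every element has a left and a right local unit in it. -/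
def IsSUnitalSub (I : AddSubgroup A) : Prop :=
  ∀ a ∈ I, ∃ u ∈ I, ∃ v ∈ I, u * a = a ∧ a * v = a

variable (𝒜 : G → AddSubgroup A)

/-- `S` is symmetrically graded if `S_g S_{g⁻¹} S_g = S_g` for all `g`. -/
def IsSymmetricallyGraded : Prop := ∀ g : G, 𝒜 g * 𝒜 (-g) * 𝒜 g = 𝒜 g

/-- `S` is nearly epsilon-strongly graded if each `S_g` is an s-unital
`(S_g S_{g⁻¹}, S_{g⁻¹} S_g)`-bimodule: for every `s ∈ S_g` there are
`u ∈ S_g S_{g⁻¹}` and `v ∈ S_{g⁻¹} S_g` with `u s = s = s v`. -/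
def IsNearlyEpsilonStrong : Prop :=
  ∀ g : G, ∀ s ∈ 𝒜 g, ∃ u ∈ 𝒜 g * 𝒜 (-g), ∃ v ∈ 𝒜 (-g) * 𝒜 g, u * s = s ∧ s * v = s


theorem prodSMul_le_component
    (𝒜 : G → AddSubgroup A) (ℳ : G → AddSubgroup M) [SetLike.GradedSMul 𝒜 ℳ] (g : G) :
    prodSMul (𝒜 g * 𝒜 (-g)) (ℳ g) ≤ ℳ g := by
  intro x hx
  refine AddSubmonoid.smul_induction_on hx (fun a ha m hm => ?_) (fun x y hx hy => (ℳ g).add_mem hx hy)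
  refine AddSubmonoid.mul_induction_on ha (fun s hs t ht => ?_) (fun a b hamem hbmem => ?_)
  · have h1 : t • m ∈ ℳ (-g + g) := SetLike.GradedSMul.smul_mem (A := 𝒜) (B := ℳ) ht hm
    have := SetLike.GradedSMul.smul_mem (A := 𝒜) (B := ℳ) hs h1
    rw [mul_smul]
    simpa using this
  · rw [add_smul]; exact (ℳ g).add_mem hamem hbmem


/-- For a graded ring `S` and a graded left `S`-module `M`,
`S(M) = ⊕_g (S_g S_{g⁻¹}) M_g` is a graded submodule of `M`:
its intersection with `M_h` is `(S_h S_{h⁻¹}) M_h` for every `h`. -/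
theorem gradedSubmodule_inf_component
    {G : Type} [AddGroup G] [DecidableEq G]
    {A : Type} [Ring A] (𝒜 : G → AddSubgroup A) [GradedRing 𝒜]
    {M : Type} [AddCommGroup M] [Module A M]
    (ℳ : G → AddSubgroup M) [SetLike.GradedSMul 𝒜 ℳ] [DirectSum.Decomposition ℳ]
    (h : G) :
    (⨆ g : G, prodSMul (𝒜 g * 𝒜 (-g)) (ℳ g)) ⊓ ℳ h
      = prodSMul (𝒜 h * 𝒜 (-h)) (ℳ h) := by
  refine le_antisymm ?_ (le_inf (le_iSup (fun g => prodSMul (𝒜 g * 𝒜 (-g)) (ℳ g)) h) (prodSMul_le_component 𝒜 ℳ h))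
  rintro x ⟨hx, hxh⟩
  have key : ∀ y ∈ ⨆ g : G, prodSMul (𝒜 g * 𝒜 (-g)) (ℳ g),
      ((DirectSum.decompose ℳ y h : ℳ h) : M) ∈ prodSMul (𝒜 h * 𝒜 (-h)) (ℳ h) := by
    intro y hy
    refine AddSubgroup.iSup_induction (C := fun y =>
        ((DirectSum.decompose ℳ y h : ℳ h) : M) ∈ prodSMul (𝒜 h * 𝒜 (-h)) (ℳ h))
      _ hy (fun g z hz => ?_) (by simpa using zero_mem _) (fun a b ha hb => ?_)
    · simp only []
      by_cases hgh : g = h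
      · subst hgh
        rwa [DirectSum.decompose_of_mem_same ℳ (prodSMul_le_component 𝒜 ℳ g hz)]
      · rw [DirectSum.decompose_of_mem_ne ℳ (prodSMul_le_component 𝒜 ℳ g hz) hgh]
        exact zero_mem _
    · simp only [] at ha hb ⊢
      rw [DirectSum.decompose_add]
      simpa using add_mem ha hb
  have := key x hx
  rwa [DirectSum.decompose_of_mem_same ℳ hxh] at this
end Defs
end

section
/- A G-graded ring S is nearly epsilon-strongly graded if and only if S is symmetrically graded (S_g S_{g⁻¹} S_g = S_g for all g) and for each g ∈ G the ring S_g S_{g⁻¹} is s-unital. -/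
open Pointwise

section Defs

variable {G : Type} [AddGroup G] [DecidableEq G]
variable {A : Type} [Ring A]
variable {M : Type} [AddCommGroup M] [Module A M]

variable (𝒜 : G → AddSubgroup A)

/- Auxiliary lemmas -/

lemma aux_mul_le {M N P : AddSubgroup A} (h : ∀ m ∈ M, ∀ n ∈ N, m * n ∈ P) :
    M * N ≤ P := fun _ hx =>
  AddSubmonoid.mul_induction_on hx h (fun _ _ hx hy => P.add_mem hx hy)

lemma aux_mul_assoc_le1 (M N P : AddSubgroup A) : (M * N) * P ≤ M * (N * P) := by
  refine aux_mul_le fun x hx p hp => ?_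
  refine AddSubmonoid.mul_induction_on hx (fun m hm n hn => ?_) (fun a b ha hb => ?_)
  · rw [mul_assoc]
    exact AddSubmonoid.mul_mem_mul hm (AddSubmonoid.mul_mem_mul hn hp)
  · rw [add_mul]; exact (M * (N * P)).add_mem ha hb

lemma aux_mul_assoc_le2 (M N P : AddSubgroup A) : M * (N * P) ≤ (M * N) * P := by
  refine aux_mul_le fun m hm x hx => ?_
  refine AddSubmonoid.mul_induction_on hx (fun n hn p hp => ?_) (fun a b ha hb => ?_)
  · rw [← mul_assoc]
    exact AddSubmonoid.mul_mem_mul (AddSubmonoid.mul_mem_mul hm hn) hp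
  · rw [mul_add]; exact ((M * N) * P).add_mem ha hb

/-- Extend a left local unit. -/
lemma aux_extend_left {I Mo : AddSubgroup A}
    (hmul : ∀ x ∈ I, ∀ y ∈ I, x * y ∈ I)
    (hIM : ∀ x ∈ I, ∀ m ∈ Mo, x * m ∈ Mo)
    (h : ∀ m ∈ Mo, ∃ f ∈ I, f * m = m)
    {s : A} (hs : s ∈ Mo) {u : A} (hu : u ∈ I) :
    ∃ u' ∈ I, u' * s = s ∧ ∀ x, u * x = x → u' * x = x := by
  obtain ⟨f, hf, hfs⟩ := h (s - u * s) (Mo.sub_mem hs (hIM u hu s hs))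
  refine ⟨u + f - f * u, I.sub_mem (I.add_mem hu hf) (hmul f hf u hu), ?_, fun x hx => ?_⟩
  · have e : (u + f - f * u) * s = u * s + f * (s - u * s) := by noncomm_ring
    rw [e, hfs]
    abel
  · have e : (u + f - f * u) * x = u * x + f * (x - u * x) := by noncomm_ring
    rw [e, hx, sub_self, mul_zero, add_zero]

/-- Every element of `Mo * N` has a left local unit in `I`, provided every element of
`Mo` has one. -/
lemma aux_left_unit {I Mo N : AddSubgroup A}
    (hmul : ∀ x ∈ I, ∀ y ∈ I, x * y ∈ I)
    (hIM : ∀ x ∈ I, ∀ m ∈ Mo, x * m ∈ Mo)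
    (h : ∀ m ∈ Mo, ∃ f ∈ I, f * m = m)
    {a : A} (ha : a ∈ Mo * N) : ∃ u ∈ I, u * a = a := by
  have key : ∀ u ∈ I, ∃ u' ∈ I, u' * a = a ∧ ∀ x, u * x = x → u' * x = x := by
    refine AddSubmonoid.mul_induction_on ha (fun m hm n hn u hu => ?_)
      (fun x y hx hy u hu => ?_)
    · obtain ⟨u', hu', hus, hext⟩ := aux_extend_left hmul hIM h hm hu
      exact ⟨u', hu', by rw [← mul_assoc, hus], hext⟩
    · obtain ⟨u₁, hu₁, hux, hext₁⟩ := hx u hu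
      obtain ⟨u₂, hu₂, huy, hext₂⟩ := hy u₁ hu₁
      refine ⟨u₂, hu₂, ?_, fun z hz => hext₂ z (hext₁ z hz)⟩
      rw [mul_add, huy, hext₂ x hux]
  obtain ⟨u, hu, hua, _⟩ := key 0 I.zero_mem
  exact ⟨u, hu, hua⟩

/-- Mirror: extend a right local unit. -/
lemma aux_extend_right {I No : AddSubgroup A}
    (hmul : ∀ x ∈ I, ∀ y ∈ I, x * y ∈ I)
    (hNI : ∀ n ∈ No, ∀ x ∈ I, n * x ∈ No)
    (h : ∀ n ∈ No, ∃ f ∈ I, n * f = n)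
    {s : A} (hs : s ∈ No) {v : A} (hv : v ∈ I) :
    ∃ v' ∈ I, s * v' = s ∧ ∀ x, x * v = x → x * v' = x := by
  obtain ⟨f, hf, hfs⟩ := h (s - s * v) (No.sub_mem hs (hNI s hs v hv))
  refine ⟨v + f - v * f, I.sub_mem (I.add_mem hv hf) (hmul v hv f hf), ?_, fun x hx => ?_⟩
  · have e : s * (v + f - v * f) = s * v + (s - s * v) * f := by noncomm_ring
    rw [e, hfs]
    abel
  · have e : x * (v + f - v * f) = x * v + (x - x * v) * f := by noncomm_ring
    rw [e, hx, sub_self, zero_mul, add_zero]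

lemma aux_right_unit {I Mo N : AddSubgroup A}
    (hmul : ∀ x ∈ I, ∀ y ∈ I, x * y ∈ I)
    (hNI : ∀ n ∈ N, ∀ x ∈ I, n * x ∈ N)
    (h : ∀ n ∈ N, ∃ f ∈ I, n * f = n)
    {a : A} (ha : a ∈ Mo * N) : ∃ v ∈ I, a * v = a := by
  have key : ∀ v ∈ I, ∃ v' ∈ I, a * v' = a ∧ ∀ x, x * v = x → x * v' = x := by
    refine AddSubmonoid.mul_induction_on ha (fun m hm n hn v hv => ?_)
      (fun x y hx hy v hv => ?_)
    · obtain ⟨v', hv', hvs, hext⟩ := aux_extend_right hmul hNI h hn hv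
      exact ⟨v', hv', by rw [mul_assoc, hvs], hext⟩
    · obtain ⟨v₁, hv₁, hvx, hext₁⟩ := hx v hv
      obtain ⟨v₂, hv₂, hvy, hext₂⟩ := hy v₁ hv₁
      refine ⟨v₂, hv₂, ?_, fun z hz => hext₂ z (hext₁ z hz)⟩
      rw [add_mul, hvy, hext₂ x hvx]
  obtain ⟨v, hv, hva, _⟩ := key 0 I.zero_mem
  exact ⟨v, hv, hva⟩

/-- `S` is nearly epsilon-strongly graded iff it is symmetrically
graded and each `S_g S_{g⁻¹}` is an s-unital ring. -/
theorem isNearlyEpsilonStrong_iff_symmetricallyGraded_and_sUnital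
    {G : Type} [AddGroup G] [DecidableEq G]
    {A : Type} [Ring A] (𝒜 : G → AddSubgroup A) [GradedRing 𝒜] :
    IsNearlyEpsilonStrong 𝒜 ↔
      IsSymmetricallyGraded 𝒜 ∧ ∀ g : G, IsSUnitalSub (𝒜 g * 𝒜 (-g)) := by
  -- generic degree facts
  have hdeg : ∀ g h : G, 𝒜 g * 𝒜 h ≤ 𝒜 (g + h) := fun g h =>
    aux_mul_le fun m hm n hn => SetLike.mul_mem_graded hm hn
  -- `R_g := 𝒜 g * 𝒜 (-g)` is closed under multiplication
  have hRmul : ∀ g : G, ∀ x ∈ 𝒜 g * 𝒜 (-g), ∀ y ∈ 𝒜 g * 𝒜 (-g), x * y ∈ 𝒜 g * 𝒜 (-g) := by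
    intro g x hx y hy
    have h1 : x ∈ 𝒜 (0 : G) := by simpa using hdeg g (-g) hx
    refine AddSubmonoid.mul_induction_on hy (fun m hm n hn => ?_) (fun a b ha hb => ?_)
    · rw [← mul_assoc]
      refine AddSubmonoid.mul_mem_mul ?_ hn
      simpa using SetLike.mul_mem_graded h1 hm
    · rw [mul_add]; exact (𝒜 g * 𝒜 (-g)).add_mem ha hb
  -- `R_g * 𝒜 g ≤ 𝒜 g`
  have hRM : ∀ g : G, ∀ x ∈ 𝒜 g * 𝒜 (-g), ∀ m ∈ 𝒜 g, x * m ∈ 𝒜 g := by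
    intro g x hx m hm
    have h1 : x ∈ 𝒜 (0 : G) := by simpa using hdeg g (-g) hx
    simpa using SetLike.mul_mem_graded h1 hm
  -- `𝒜 (-g) * R_g ≤ 𝒜 (-g)`
  have hMR : ∀ g : G, ∀ n ∈ 𝒜 (-g), ∀ x ∈ 𝒜 g * 𝒜 (-g), n * x ∈ 𝒜 (-g) := by
    intro g n hn x hx
    have h1 : x ∈ 𝒜 (0 : G) := by simpa using hdeg g (-g) hx
    simpa using SetLike.mul_mem_graded hn h1
  constructor
  · intro hN
    constructor
    · -- symmetrically graded
      intro g
      refine le_antisymm (aux_mul_le fun x hx m hm => hRM g x hx m hm) ?_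
      intro s hs
      obtain ⟨u, hu, -, -, hus, -⟩ := hN g s hs
      rw [← hus]
      exact AddSubmonoid.mul_mem_mul hu hs
    · -- s-unitality of each `R_g`
      intro g a ha
      have hleft : ∀ m ∈ 𝒜 g, ∃ f ∈ 𝒜 g * 𝒜 (-g), f * m = m := by
        intro m hm
        obtain ⟨u, hu, -, -, hus, -⟩ := hN g m hm
        exact ⟨u, hu, hus⟩
      have hright : ∀ n ∈ 𝒜 (-g), ∃ f ∈ 𝒜 g * 𝒜 (-g), n * f = n := by
        intro n hn
        obtain ⟨-, -, v, hv, -, hvs⟩ := hN (-g) n hn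
        rw [neg_neg] at hv
        exact ⟨v, hv, hvs⟩
      obtain ⟨u, hu, hua⟩ := aux_left_unit (hRmul g) (hRM g) hleft ha
      obtain ⟨v, hv, hva⟩ := aux_right_unit (hRmul g) (hMR g) hright ha
      exact ⟨u, hu, v, hv, hua, hva⟩
  · rintro ⟨hSym, hU⟩ g s hs
    have hs' : s ∈ 𝒜 g * 𝒜 (-g) * 𝒜 g := (hSym g).symm ▸ hs
    -- left unit
    have hleft : ∀ m ∈ 𝒜 g * 𝒜 (-g), ∃ f ∈ 𝒜 g * 𝒜 (-g), f * m = m := by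
      intro m hm
      obtain ⟨u, hu, -, -, hum, -⟩ := hU g m hm
      exact ⟨u, hu, hum⟩
    obtain ⟨u, hu, hus⟩ := aux_left_unit (hRmul g) (hRmul g)
      (I := 𝒜 g * 𝒜 (-g)) hleft hs'
    -- right unit
    have hs'' : s ∈ 𝒜 g * (𝒜 (-g) * 𝒜 g) := aux_mul_assoc_le1 _ _ _ hs'
    have hR'mul : ∀ x ∈ 𝒜 (-g) * 𝒜 g, ∀ y ∈ 𝒜 (-g) * 𝒜 g, x * y ∈ 𝒜 (-g) * 𝒜 g := by
      have := hRmul (-g); rwa [neg_neg] at this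
    have hright : ∀ n ∈ 𝒜 (-g) * 𝒜 g, ∃ f ∈ 𝒜 (-g) * 𝒜 g, n * f = n := by
      intro n hn
      have hU' := hU (-g); rw [neg_neg] at hU'
      obtain ⟨-, -, v, hv, -, hnv⟩ := hU' n hn
      exact ⟨v, hv, hnv⟩
    obtain ⟨v, hv, hvs⟩ := aux_right_unit hR'mul hR'mul
      (I := 𝒜 (-g) * 𝒜 g) hright hs''
    exact ⟨u, hu, v, hv, hus, hvs⟩
end Defs
end

section
/- If S is a nearly epsilon-strongly G-graded ring, then for every graded left S-module M and all g, h ∈ G, one has S_g M_h = (S_g S_{g⁻¹}) M_{gh}. -/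
open Pointwise

section Defs

variable {G : Type} [AddGroup G] [DecidableEq G]
variable {A : Type} [Ring A]
variable {M : Type} [AddCommGroup M] [Module A M]

variable (𝒜 : G → AddSubgroup A)

/-- If `S` is nearly epsilon-strongly graded, then for every graded
left `S`-module `M` and all `g, h`, `S_g M_h = (S_g S_{g⁻¹}) M_{gh}`. -/
theorem smul_component_eq_of_isNearlyEpsilonStrong
    {G : Type} [AddGroup G] [DecidableEq G]
    {A : Type} [Ring A] (𝒜 : G → AddSubgroup A) [GradedRing 𝒜]
    (hS : IsNearlyEpsilonStrong 𝒜)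
    {M : Type} [AddCommGroup M] [Module A M]
    (ℳ : G → AddSubgroup M) [SetLike.GradedSMul 𝒜 ℳ] [DirectSum.Decomposition ℳ]
    (g h : G) :
    prodSMul (𝒜 g) (ℳ h) = prodSMul (𝒜 g * 𝒜 (-g)) (ℳ (g + h)) := by
  apply le_antisymm
  · intro x hx
    refine AddSubmonoid.smul_induction_on hx (fun a ha m hm => ?_) (fun x y hx hy => add_mem hx hy)
    obtain ⟨u, hu, v, hv, hua, hav⟩ := hS g a ha
    have hm' : a • m ∈ ℳ (g + h) := SetLike.GradedSMul.smul_mem (A := 𝒜) (B := ℳ) ha hm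
    have heq : u • (a • m) = a • m := by rw [smul_smul, hua]
    rw [← heq]
    exact AddSubmonoid.smul_mem_smul hu hm'
  · intro x hx
    refine AddSubmonoid.smul_induction_on hx (fun a ha m hm => ?_) (fun x y hx hy => add_mem hx hy)
    refine AddSubmonoid.mul_induction_on ha (fun s hs t ht => ?_)
      (fun x y hx hy => ?_)
    · have htm : t • m ∈ ℳ h := by
        have := SetLike.GradedSMul.smul_mem (A := 𝒜) (B := ℳ) ht hm
        rwa [vadd_eq_add, neg_add_cancel_left] at this
      rw [mul_smul]
      exact AddSubmonoid.smul_mem_smul hs htm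
    · rw [add_smul]; exact add_mem hx hy
end Defs
end

section
/- Let S be a G-graded ring such that for every graded left S-module M and all g, h ∈ G, S_g M_h = (S_g S_{g⁻¹}) M_{gh}, and each S_g S_{g⁻¹} is s-unital. Then S is symmetrically graded, hence nearly epsilon-strongly graded. -/
open Pointwise

section Defs

variable {G : Type} [AddGroup G] [DecidableEq G]
variable {A : Type} [Ring A]
variable {M : Type} [AddCommGroup M] [Module A M]

variable (𝒜 : G → AddSubgroup A)

/- ### Auxiliary lemmas -/

/-- Elements of `prodSMul S N` are finite sums of products `a • m`. -/
theorem exists_list_of_mem_prodSMul {S : AddSubgroup A} {N : AddSubgroup M} {x : M}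
    (hx : x ∈ prodSMul S N) :
    ∃ l : List (A × M), (∀ p ∈ l, p.1 ∈ S ∧ p.2 ∈ N) ∧ (l.map fun p => p.1 • p.2).sum = x := by
  refine AddSubmonoid.smul_induction_on hx (fun a ha m hm => ?_) (fun x y hx hy => ?_)
  · exact ⟨[(a, m)], by rintro p hp; simp at hp; subst hp; exact ⟨ha, hm⟩, by simp⟩
  · obtain ⟨l1, h1, e1⟩ := hx
    obtain ⟨l2, h2, e2⟩ := hy
    refine ⟨l1 ++ l2, ?_, by simp [e1, e2]⟩
    intro p hp
    rcases List.mem_append.mp hp with h | h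
    exacts [h1 p h, h2 p h]

/-- Elements of `S * T` are finite sums of products `a * b`. -/
theorem exists_list_of_mem_mul {S T : AddSubgroup A} {x : A}
    (hx : x ∈ S * T) :
    ∃ l : List (A × A), (∀ p ∈ l, p.1 ∈ S ∧ p.2 ∈ T) ∧ (l.map fun p => p.1 * p.2).sum = x := by
  refine AddSubmonoid.mul_induction_on hx (fun a ha m hm => ?_) (fun x y hx hy => ?_)
  · exact ⟨[(a, m)], by rintro p hp; simp at hp; subst hp; exact ⟨ha, hm⟩, by simp⟩
  · obtain ⟨l1, h1, e1⟩ := hx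
    obtain ⟨l2, h2, e2⟩ := hy
    refine ⟨l1 ++ l2, ?_, by simp [e1, e2]⟩
    intro p hp
    rcases List.mem_append.mp hp with h | h
    exacts [h1 p h, h2 p h]

theorem graded_mul_le' [GradedRing 𝒜] (g h : G) :
    ∀ x ∈ 𝒜 g * 𝒜 h, x ∈ 𝒜 (g + h) := by
  intro x hx
  exact AddSubmonoid.mul_induction_on hx (fun a ha b hb => SetLike.mul_mem_graded ha hb)
    (fun _ _ h1 h2 => add_mem h1 h2)

/-- `S_g S_{-g}` is closed under multiplication. -/
theorem mulClosed' [GradedRing 𝒜] (g : G) :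
    ∀ x ∈ 𝒜 g * 𝒜 (-g), ∀ y ∈ 𝒜 g * 𝒜 (-g), x * y ∈ 𝒜 g * 𝒜 (-g) := by
  intro x hx y hy
  have hx0 : x ∈ 𝒜 (0 : G) := by
    have := graded_mul_le' 𝒜 g (-g) x hx
    rwa [add_neg_cancel] at this
  refine AddSubmonoid.mul_induction_on hy (fun b hb c hc => ?_) (fun y1 y2 h1 h2 => ?_)
  · rw [← mul_assoc]
    have hxb : x * b ∈ 𝒜 g := by
      have := SetLike.mul_mem_graded hx0 hb
      rwa [zero_add] at this
    exact AddSubmonoid.mul_mem_mul hxb hc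
  · rw [mul_add]
    exact add_mem h1 h2

/-- Reassociation of membership: `(S_g S_{-g}) S_g ⊆ S_g (S_{-g} S_g)` elementwise. -/
theorem assoc_mem' [GradedRing 𝒜] {g : G} {a t : A} (ha : a ∈ 𝒜 g * 𝒜 (-g)) (ht : t ∈ 𝒜 g) :
    a * t ∈ 𝒜 g * (𝒜 (-g) * 𝒜 g) := by
  refine AddSubmonoid.mul_induction_on ha (fun x hx y hy => ?_) (fun a1 a2 h1 h2 => ?_)
  · rw [mul_assoc]
    exact AddSubmonoid.mul_mem_mul hx (AddSubmonoid.mul_mem_mul hy ht)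
  · rw [add_mul]
    exact add_mem h1 h2

/-- In an s-unital subring closed under multiplication, any finite family of elements has a
common left local unit. -/
theorem commonLeftUnit (I : AddSubgroup A) (hc : ∀ x ∈ I, ∀ y ∈ I, x * y ∈ I)
    (hsu : IsSUnitalSub I) :
    ∀ l : List A, (∀ a ∈ l, a ∈ I) → ∃ u ∈ I, ∀ a ∈ l, u * a = a := by
  intro l
  induction l with
  | nil => exact fun _ => ⟨0, I.zero_mem, by simp⟩
  | cons a t ih =>
    intro h
    obtain ⟨e, he, hel⟩ := ih fun b hb => h b (List.mem_cons_of_mem _ hb)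
    have ha : a ∈ I := h a (List.mem_cons_self)
    obtain ⟨f, hf, -, -, hfl, -⟩ := hsu (a - e * a) (I.sub_mem ha (hc e he a ha))
    refine ⟨e + f - f * e, I.sub_mem (I.add_mem he hf) (hc f hf e he), ?_⟩
    intro b hb
    have key : (e + f - f * e) * b = e * b + (f * b - f * (e * b)) := by noncomm_ring
    rcases List.mem_cons.mp hb with rfl | hb
    · rw [key, ← mul_sub, hfl]; abel
    · rw [key, hel b hb]; abel

/-- In an s-unital subring closed under multiplication, any finite family of elements has a
common right local unit. -/
theorem commonRightUnit (I : AddSubgroup A) (hc : ∀ x ∈ I, ∀ y ∈ I, x * y ∈ I)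
    (hsu : IsSUnitalSub I) :
    ∀ l : List A, (∀ a ∈ l, a ∈ I) → ∃ v ∈ I, ∀ a ∈ l, a * v = a := by
  intro l
  induction l with
  | nil => exact fun _ => ⟨0, I.zero_mem, by simp⟩
  | cons a t ih =>
    intro h
    obtain ⟨e, he, hel⟩ := ih fun b hb => h b (List.mem_cons_of_mem _ hb)
    have ha : a ∈ I := h a (List.mem_cons_self)
    obtain ⟨-, -, f, hf, -, hfr⟩ := hsu (a - a * e) (I.sub_mem ha (hc a ha e he))
    refine ⟨e + f - e * f, I.sub_mem (I.add_mem he hf) (hc e he f hf), ?_⟩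
    intro b hb
    have key : b * (e + f - e * f) = b * e + (b * f - (b * e) * f) := by noncomm_ring
    rcases List.mem_cons.mp hb with rfl | hb
    · rw [key, ← sub_mul, hfr]; abel
    · rw [key, hel b hb]; abel

theorem mul_list_sum_left (u : A) (l : List A) (h : ∀ a ∈ l, u * a = a) :
    u * l.sum = l.sum := by
  induction l with
  | nil => simp
  | cons a t ih =>
    simp only [List.sum_cons, mul_add, h a (List.mem_cons_self),
      ih fun b hb => h b (List.mem_cons_of_mem _ hb)]

theorem mul_list_sum_right (v : A) (l : List A) (h : ∀ a ∈ l, a * v = a) :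
    l.sum * v = l.sum := by
  induction l with
  | nil => simp
  | cons a t ih =>
    simp only [List.sum_cons, add_mul, h a (List.mem_cons_self),
      ih fun b hb => h b (List.mem_cons_of_mem _ hb)]

end Defs

/-- If for every graded left `S`-module `M` and all `g, h` one has
`S_g M_h = (S_g S_{g⁻¹}) M_{gh}`, and each `S_g S_{g⁻¹}` is s-unital, then `S` is
symmetrically graded, hence nearly epsilon-strongly graded. -/
theorem isNearlyEpsilonStrong_of_smul_component_eq
    {G : Type} [AddGroup G] [DecidableEq G]
    {A : Type} [Ring A] (𝒜 : G → AddSubgroup A) [GradedRing 𝒜]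
    (hmod : ∀ (M : Type) [AddCommGroup M] [Module A M]
      (ℳ : G → AddSubgroup M) [SetLike.GradedSMul 𝒜 ℳ] [DirectSum.Decomposition ℳ],
      ∀ g h : G, prodSMul (𝒜 g) (ℳ h) = prodSMul (𝒜 g * 𝒜 (-g)) (ℳ (g + h)))
    (hsu : ∀ g : G, IsSUnitalSub (𝒜 g * 𝒜 (-g))) :
    IsSymmetricallyGraded 𝒜 ∧ IsNearlyEpsilonStrong 𝒜 := by
  classical
  -- every `s ∈ S_g` lies in `(S_g S_{-g}) • S_g`
  have hkey : ∀ g : G, ∀ s ∈ 𝒜 g, s ∈ prodSMul (𝒜 g * 𝒜 (-g)) (𝒜 g) := by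
    intro g s hs
    have h1m : (1 : A) ∈ 𝒜 (0 : G) := SetLike.one_mem_graded 𝒜
    have h2 : s • (1 : A) ∈ prodSMul (𝒜 g) (𝒜 (0 : G)) :=
      AddSubmonoid.smul_mem_smul hs h1m
    have h1 : s ∈ prodSMul (𝒜 g) (𝒜 (0 : G)) := by simpa using h2
    rw [hmod A 𝒜 g 0] at h1
    rwa [add_zero] at h1
  have hsym : IsSymmetricallyGraded 𝒜 := by
    intro g
    refine le_antisymm ?_ ?_
    · intro x hx
      refine AddSubmonoid.mul_induction_on hx (fun a ha b hb => ?_)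
        (fun _ _ h1 h2 => add_mem h1 h2)
      have ha0 : a ∈ 𝒜 (0 : G) := by
        have := graded_mul_le' 𝒜 g (-g) a ha
        rwa [add_neg_cancel] at this
      have := SetLike.mul_mem_graded ha0 hb
      rwa [zero_add] at this
    · intro s hs
      refine AddSubmonoid.smul_induction_on (hkey g s hs) (fun a ha n hn => ?_)
        (fun _ _ h1 h2 => add_mem h1 h2)
      rw [smul_eq_mul]
      exact AddSubmonoid.mul_mem_mul ha hn
  refine ⟨hsym, ?_⟩
  intro g s hs
  obtain ⟨l, hl, hsum⟩ := exists_list_of_mem_prodSMul (hkey g s hs)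
  -- common left local unit
  obtain ⟨u, hu, hul⟩ := commonLeftUnit (𝒜 g * 𝒜 (-g)) (mulClosed' 𝒜 g) (hsu g)
    (l.map Prod.fst) (by
      intro a ha
      obtain ⟨p, hp, rfl⟩ := List.mem_map.mp ha
      exact (hl p hp).1)
  have hus : u * s = s := by
    rw [← hsum]
    apply mul_list_sum_left
    intro a ha
    obtain ⟨p, hp, rfl⟩ := List.mem_map.mp ha
    rw [smul_eq_mul, ← mul_assoc, hul p.1 (List.mem_map.mpr ⟨p, hp, rfl⟩)]
  -- reassociate to get `s ∈ S_g (S_{-g} S_g)`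
  have hsr : s ∈ 𝒜 g * (𝒜 (-g) * 𝒜 g) := by
    rw [← hsum]
    refine list_sum_mem ?_
    intro x hxm
    obtain ⟨p, hp, rfl⟩ := List.mem_map.mp hxm
    rw [smul_eq_mul]
    exact assoc_mem' 𝒜 (hl p hp).1 (hl p hp).2
  obtain ⟨l2, hl2, hsum2⟩ := exists_list_of_mem_mul hsr
  have hJc : ∀ x ∈ 𝒜 (-g) * 𝒜 g, ∀ y ∈ 𝒜 (-g) * 𝒜 g, x * y ∈ 𝒜 (-g) * 𝒜 g := by
    have := mulClosed' 𝒜 (-g)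
    rwa [neg_neg] at this
  have hJu : IsSUnitalSub (𝒜 (-g) * 𝒜 g) := by
    have := hsu (-g)
    rwa [neg_neg] at this
  obtain ⟨v, hv, hvr⟩ := commonRightUnit (𝒜 (-g) * 𝒜 g) hJc hJu
    (l2.map Prod.snd) (by
      intro a ha
      obtain ⟨p, hp, rfl⟩ := List.mem_map.mp ha
      exact (hl2 p hp).2)
  have hsv : s * v = s := by
    rw [← hsum2]
    apply mul_list_sum_right
    intro a ha
    obtain ⟨p, hp, rfl⟩ := List.mem_map.mp ha
    rw [mul_assoc, hvr p.2 (List.mem_map.mpr ⟨p, hp, rfl⟩)]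
  exact ⟨u, hu, v, hv, hus, hsv⟩
end

section
/- If S is a nearly epsilon-strongly G-graded ring and M is a graded left S-module, then for all g, h ∈ G the multiplication map m_{g,h}: S_g ⊗_R M_h → (S_g S_{g⁻¹}) M_{gh}, s ⊗ m ↦ sm, is an isomorphism of left R-modules, where R = S_e. -/
open Pointwise

section Defs

variable {G : Type} [AddGroup G] [DecidableEq G]
variable {A : Type} [Ring A]
variable {M : Type} [AddCommGroup M] [Module A M]

variable (𝒜 : G → AddSubgroup A)

section Stmt5

open scoped TensorProduct

variable {G : Type} [AddGroup G] [DecidableEq G]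
variable {A : Type} [Ring A] (𝒜 : G → AddSubgroup A) [GradedRing 𝒜]
variable {M : Type} [AddCommGroup M] [Module A M]
variable (ℳ : G → AddSubgroup M) [SetLike.GradedSMul 𝒜 ℳ] [DirectSum.Decomposition ℳ]

/-- The submodule of balanced relations defining the tensor product
`S_g ⊗_R M_h` over `R = S_e` as a quotient of `S_g ⊗_ℤ M_h`. -/
def balancedRel (g h : G) : Submodule ℤ (↥(𝒜 g) ⊗[ℤ] ↥(ℳ h)) :=
  Submodule.span ℤ
    { x | ∃ (s : ↥(𝒜 g)) (r : ↥(𝒜 0)) (m : ↥(ℳ h)),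
        x = (⟨s.1 * r.1, by
              have := SetLike.mul_mem_graded s.2 r.2; rwa [add_zero] at this⟩ :
            ↥(𝒜 g)) ⊗ₜ[ℤ] m
          - s ⊗ₜ[ℤ] (⟨r.1 • m.1, by
              have := SetLike.GradedSMul.smul_mem r.2 m.2; rwa [zero_vadd] at this⟩ :
            ↥(ℳ h)) }

/-- The tensor product `S_g ⊗_R M_h` over `R = S_e`, realized as a quotient of the
tensor product over `ℤ` by the balanced relations. -/
def tensorOverR (g h : G) :=
  (↥(𝒜 g) ⊗[ℤ] ↥(ℳ h)) ⧸ balancedRel 𝒜 ℳ g h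

noncomputable instance (g h : G) : AddCommGroup (tensorOverR 𝒜 ℳ g h) :=
  inferInstanceAs (AddCommGroup ((↥(𝒜 g) ⊗[ℤ] ↥(ℳ h)) ⧸ balancedRel 𝒜 ℳ g h))

noncomputable instance (g h : G) : Module ℤ (tensorOverR 𝒜 ℳ g h) :=
  inferInstanceAs (Module ℤ ((↥(𝒜 g) ⊗[ℤ] ↥(ℳ h)) ⧸ balancedRel 𝒜 ℳ g h))

namespace Stmt5Aux
set_option linter.unusedSectionVars false

variable {𝒜} {ℳ} {g h : G}

/-- combined product function on pairs -/
abbrev pp (pq : ↥(𝒜 g) × ↥(𝒜 (-g))) : A := pq.1.1 * pq.2.1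

lemma smul_mem_gh {s : A} (hs : s ∈ 𝒜 g) {m : M} (hm : m ∈ ℳ h) : s • m ∈ ℳ (g + h) := by
  have := SetLike.GradedSMul.smul_mem hs hm
  rwa [vadd_eq_add] at this

lemma neg_smul_mem {q : A} (hq : q ∈ 𝒜 (-g)) {x : M} (hx : x ∈ ℳ (g + h)) : q • x ∈ ℳ h := by
  have := SetLike.GradedSMul.smul_mem hq hx
  rwa [vadd_eq_add, neg_add_cancel_left] at this

lemma smul_mem_0h {r : A} (hr : r ∈ 𝒜 0) {m : M} (hm : m ∈ ℳ h) : r • m ∈ ℳ h := by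
  have := SetLike.GradedSMul.smul_mem hr hm
  rwa [zero_vadd] at this

lemma mul_mem_g0 {p r : A} (hp : p ∈ 𝒜 g) (hr : r ∈ 𝒜 0) : p * r ∈ 𝒜 g := by
  have := SetLike.mul_mem_graded hp hr
  rwa [add_zero] at this

lemma mul_mem_0g {r p : A} (hr : r ∈ 𝒜 0) (hp : p ∈ 𝒜 (-g)) : r * p ∈ 𝒜 (-g) := by
  have := SetLike.mul_mem_graded hr hp
  rwa [zero_add] at this

lemma mul_mem_neg {q s : A} (hq : q ∈ 𝒜 (-g)) (hs : s ∈ 𝒜 g) : q * s ∈ 𝒜 0 := by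
  have := SetLike.mul_mem_graded hq hs
  rwa [neg_add_cancel] at this

lemma memX_decomp {u : A} (hu : u ∈ 𝒜 g * 𝒜 (-g)) :
    ∃ l : List (↥(𝒜 g) × ↥(𝒜 (-g))), u = (l.map pp).sum := by
  refine AddSubmonoid.mul_induction_on hu (fun p hp q hq => ⟨[(⟨p,hp⟩,⟨q,hq⟩)], by simp [pp]⟩) ?_
  rintro x y ⟨l1, h1⟩ ⟨l2, h2⟩
  exact ⟨l1 ++ l2, by simp [h1, h2]⟩

lemma lsum_mem (l : List (↥(𝒜 g) × ↥(𝒜 (-g)))) : (l.map pp).sum ∈ 𝒜 g * 𝒜 (-g) := by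
  induction l with
  | nil => simpa using zero_mem _
  | cons a l ih =>
    simp only [List.map_cons, List.sum_cons]
    exact add_mem (AddSubmonoid.mul_mem_mul a.1.2 a.2.2) ih

lemma lsum_mul_mem (l : List (↥(𝒜 g) × ↥(𝒜 (-g)))) {s : A} (hs : s ∈ 𝒜 g) :
    (l.map pp).sum * s ∈ 𝒜 g := by
  induction l with
  | nil => simpa using zero_mem _
  | cons a l ih =>
    simp only [List.map_cons, List.sum_cons, add_mul]
    exact add_mem (by rw [mul_assoc]; exact mul_mem_g0 a.1.2 (mul_mem_neg a.2.2 hs)) ih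

lemma mul_lsum_mem (l : List (↥(𝒜 g) × ↥(𝒜 (-g)))) {q : A} (hq : q ∈ 𝒜 (-g)) :
    q * (l.map pp).sum ∈ 𝒜 (-g) := by
  induction l with
  | nil => simpa using zero_mem _
  | cons a l ih =>
    simp only [List.map_cons, List.sum_cons, mul_add]
    refine add_mem ?_ ih
    rw [← mul_assoc]
    exact mul_mem_0g (mul_mem_neg hq a.1.2) a.2.2

lemma neg_list_sum (l l1 : List (↥(𝒜 g) × ↥(𝒜 (-g)))) :
    ((l.map fun pq => ((-pq.1 : ↥(𝒜 g)),
        (⟨pq.2.1 * (l1.map pp).sum, mul_lsum_mem l1 pq.2.2⟩ : ↥(𝒜 (-g))))).map pp).sum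
      = -((l.map pp).sum * (l1.map pp).sum) := by
  induction l with
  | nil => simp
  | cons a l ih =>
    simp only [List.map_cons, List.sum_cons, ih, pp, add_mul]
    simp only [AddSubgroup.coe_neg, neg_mul, mul_assoc, neg_add]

/-- Common left local unit for a finite list of elements of `𝒜 g`, in decomposed form. -/
lemma common_unit (hS : IsNearlyEpsilonStrong 𝒜) (ss : List A) (hss : ∀ s ∈ ss, s ∈ 𝒜 g) :
    ∃ l : List (↥(𝒜 g) × ↥(𝒜 (-g))), ∀ s ∈ ss, (l.map pp).sum * s = s := by
  induction ss with
  | nil => exact ⟨[], by simp⟩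
  | cons s ss ih =>
    obtain ⟨l1, hl1⟩ := ih (fun x hx => hss x (List.mem_cons_of_mem _ hx))
    have hs : s ∈ 𝒜 g := hss s List.mem_cons_self
    set u1 : A := (l1.map pp).sum with hu1
    have hdiff : s - u1 * s ∈ 𝒜 g := sub_mem hs (lsum_mul_mem l1 hs)
    obtain ⟨u2, hu2X, v, hv, hu2, -⟩ := hS g (s - u1 * s) hdiff
    obtain ⟨l2, hl2⟩ := memX_decomp hu2X
    -- the list for `u1 + u2 - u2 * u1`
    refine ⟨l1 ++ l2 ++ l2.map (fun pq => (-pq.1, ⟨pq.2.1 * u1, mul_lsum_mem l1 pq.2.2⟩)), ?_⟩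
    have hsum : ((l1 ++ l2 ++ l2.map
        (fun pq => (-pq.1, (⟨pq.2.1 * u1, mul_lsum_mem l1 pq.2.2⟩ : ↥(𝒜 (-g)))))).map pp).sum
        = u1 + u2 - u2 * u1 := by
      have h3 : ((l2.map fun pq => ((-pq.1 : ↥(𝒜 g)),
          (⟨pq.2.1 * u1, mul_lsum_mem l1 pq.2.2⟩ : ↥(𝒜 (-g))))).map pp).sum
          = -((l2.map pp).sum * u1) := neg_list_sum l2 l1
      simp only [List.map_append, List.sum_append, h3, ← hl2, ← hu1]
      abel
    rw [hsum]
    intro x hx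
    rcases List.mem_cons.1 hx with rfl | hx
    · have hx2 : u2 * (x - u1 * x) = x - u1 * x := hu2
      have expand : (u1 + u2 - u2 * u1) * x = u1 * x + u2 * (x - u1 * x) := by noncomm_ring
      rw [expand, hx2]; abel
    · have h1 : u1 * x = x := hl1 x hx
      have expand : (u1 + u2 - u2 * u1) * x = u1 * x + u2 * x - u2 * (u1 * x) := by noncomm_ring
      rw [expand, h1]; abel

variable (𝒜 ℳ)

noncomputable def B (g h : G) : ↥(𝒜 g) →ₗ[ℤ] ↥(ℳ h) →ₗ[ℤ] M :=
  LinearMap.mk₂ ℤ (fun s m => s.1 • m.1)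
    (fun s1 s2 m => by simp [add_smul])
    (fun z s m => by
      rw [show ((z • s : ↥(𝒜 g)) : A) = z • (s : A) from rfl, smul_assoc])
    (fun s m1 m2 => by simp [smul_add])
    (fun z s m => by
      rw [show ((z • m : ↥(ℳ h)) : M) = z • (m : M) from rfl]
      exact (smul_comm z s.1 m.1).symm)

noncomputable def phiM (g h : G) : (↥(𝒜 g) ⊗[ℤ] ↥(ℳ h)) →ₗ[ℤ] M :=
  TensorProduct.lift (B 𝒜 ℳ g h)

@[simp] lemma phiM_tmul (g h : G) (s : ↥(𝒜 g)) (m : ↥(ℳ h)) :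
    phiM 𝒜 ℳ g h (s ⊗ₜ[ℤ] m) = s.1 • m.1 := rfl

variable {𝒜 ℳ}

lemma phiM_mem (hS : IsNearlyEpsilonStrong 𝒜) (t : ↥(𝒜 g) ⊗[ℤ] ↥(ℳ h)) :
    phiM 𝒜 ℳ g h t ∈ prodSMul (𝒜 g * 𝒜 (-g)) (ℳ (g + h)) := by
  induction t with
  | zero => simpa using zero_mem _
  | tmul s m =>
    obtain ⟨u, hu, v, hv, hus, -⟩ := hS g s.1 s.2
    have key : s.1 • m.1 = u • (s.1 • m.1) := by rw [← mul_smul, hus]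
    rw [phiM_tmul, key]
    exact AddSubmonoid.smul_mem_smul hu (smul_mem_gh s.2 m.2)
  | add x y hx hy => rw [map_add]; exact add_mem hx hy

variable (𝒜 ℳ) in
noncomputable def phi (hS : IsNearlyEpsilonStrong 𝒜) (g h : G) :
    (↥(𝒜 g) ⊗[ℤ] ↥(ℳ h)) →ₗ[ℤ] ↥(prodSMul (𝒜 g * 𝒜 (-g)) (ℳ (g + h))) where
  toFun t := ⟨phiM 𝒜 ℳ g h t, phiM_mem hS t⟩
  map_add' x y := Subtype.ext (map_add _ x y)
  map_smul' z x := Subtype.ext (map_smul _ z x)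

lemma phi_ker (hS : IsNearlyEpsilonStrong 𝒜) (g h : G) :
    balancedRel 𝒜 ℳ g h ≤ LinearMap.ker (phi 𝒜 ℳ hS g h) := by
  rw [balancedRel, Submodule.span_le]
  rintro x ⟨s, r, m, rfl⟩
  simp only [SetLike.mem_coe, LinearMap.mem_ker]
  refine Subtype.ext ?_
  show phiM 𝒜 ℳ g h _ = 0
  rw [map_sub, phiM_tmul, phiM_tmul]
  show (s.1 * r.1) • m.1 - s.1 • (r.1 • m.1) = 0
  rw [mul_smul, sub_self]

variable (𝒜 ℳ) in
noncomputable def phibar (hS : IsNearlyEpsilonStrong 𝒜) (g h : G) :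
    tensorOverR 𝒜 ℳ g h →ₗ[ℤ] ↥(prodSMul (𝒜 g * 𝒜 (-g)) (ℳ (g + h))) :=
  Submodule.liftQ (balancedRel 𝒜 ℳ g h) (phi 𝒜 ℳ hS g h) (phi_ker hS g h)

@[simp] lemma phibar_mk (hS : IsNearlyEpsilonStrong 𝒜) (t : ↥(𝒜 g) ⊗[ℤ] ↥(ℳ h)) :
    ((phibar 𝒜 ℳ hS g h (Submodule.Quotient.mk t) :
      ↥(prodSMul (𝒜 g * 𝒜 (-g)) (ℳ (g + h)))) : M) = phiM 𝒜 ℳ g h t := rfl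

lemma mk_rel {s r : A} {m : M} (hs : s ∈ 𝒜 g) (hr : r ∈ 𝒜 0) (hm : m ∈ ℳ h)
    (h1 : s * r ∈ 𝒜 g) (h2 : r • m ∈ ℳ h) :
    (Submodule.Quotient.mk ((⟨s * r, h1⟩ : ↥(𝒜 g)) ⊗ₜ[ℤ] (⟨m, hm⟩ : ↥(ℳ h))) :
        (↥(𝒜 g) ⊗[ℤ] ↥(ℳ h)) ⧸ balancedRel 𝒜 ℳ g h)
      = Submodule.Quotient.mk ((⟨s, hs⟩ : ↥(𝒜 g)) ⊗ₜ[ℤ] (⟨r • m, h2⟩ : ↥(ℳ h))) := by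
  rw [Submodule.Quotient.eq]
  exact Submodule.subset_span ⟨⟨s, hs⟩, ⟨r, hr⟩, ⟨m, hm⟩, rfl⟩

open TensorProduct in
noncomputable def psiPair (g h : G) (p : ↥(𝒜 g)) (q : ↥(𝒜 (-g))) :
    ↥(ℳ (g + h)) →+ ((↥(𝒜 g) ⊗[ℤ] ↥(ℳ h)) ⧸ balancedRel 𝒜 ℳ g h) :=
  AddMonoidHom.mk'
    (fun x => Submodule.Quotient.mk (p ⊗ₜ[ℤ] (⟨q.1 • x.1, neg_smul_mem q.2 x.2⟩ : ↥(ℳ h))))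
    (fun x y => by
      have key : (⟨q.1 • (x + y).1, neg_smul_mem q.2 (x + y).2⟩ : ↥(ℳ h))
          = ⟨q.1 • x.1, neg_smul_mem q.2 x.2⟩ + ⟨q.1 • y.1, neg_smul_mem q.2 y.2⟩ :=
        Subtype.ext (smul_add _ _ _)
      rw [key, tmul_add, Submodule.Quotient.mk_add])

noncomputable def Psi (g h : G) (l : List (↥(𝒜 g) × ↥(𝒜 (-g)))) :
    ↥(ℳ (g + h)) →+ ((↥(𝒜 g) ⊗[ℤ] ↥(ℳ h)) ⧸ balancedRel 𝒜 ℳ g h) :=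
  (l.map fun pq => psiPair g h pq.1 pq.2).sum

open TensorProduct in
lemma key_lemma (l : List (↥(𝒜 g) × ↥(𝒜 (-g)))) (s : ↥(𝒜 g)) (m : ↥(ℳ h)) :
    (Submodule.Quotient.mk ((⟨(l.map pp).sum * s.1, lsum_mul_mem l s.2⟩ : ↥(𝒜 g)) ⊗ₜ[ℤ] m) :
        (↥(𝒜 g) ⊗[ℤ] ↥(ℳ h)) ⧸ balancedRel 𝒜 ℳ g h)
      = Psi g h l ⟨s.1 • m.1, smul_mem_gh s.2 m.2⟩ := by
  induction l with
  | nil =>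
    have : (⟨(([] : List (↥(𝒜 g) × ↥(𝒜 (-g)))).map pp).sum * s.1, lsum_mul_mem [] s.2⟩ :
        ↥(𝒜 g)) = 0 := Subtype.ext (by simp)
    rw [this, zero_tmul]
    simp [Psi]
  | cons a l ih =>
    have split : (⟨((a :: l).map pp).sum * s.1, lsum_mul_mem (a :: l) s.2⟩ : ↥(𝒜 g))
        = ⟨a.1.1 * (a.2.1 * s.1), mul_mem_g0 a.1.2 (mul_mem_neg a.2.2 s.2)⟩
          + ⟨(l.map pp).sum * s.1, lsum_mul_mem l s.2⟩ :=
      Subtype.ext (by simp [pp, add_mul, mul_assoc])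
    rw [split, add_tmul, Submodule.Quotient.mk_add, ih,
      mk_rel a.1.2 (mul_mem_neg a.2.2 s.2) m.2
        (mul_mem_g0 a.1.2 (mul_mem_neg a.2.2 s.2)) (smul_mem_0h (mul_mem_neg a.2.2 s.2) m.2)]
    have harg : (⟨(a.2.1 * s.1) • m.1,
        smul_mem_0h (mul_mem_neg a.2.2 s.2) m.2⟩ : ↥(ℳ h))
        = ⟨a.2.1 • (s.1 • m.1), neg_smul_mem a.2.2 (smul_mem_gh s.2 m.2)⟩ :=
      Subtype.ext (mul_smul _ _ _)
    rw [harg]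
    simp [Psi, psiPair, List.map_cons, List.sum_cons]

lemma inj_aux (hS : IsNearlyEpsilonStrong 𝒜) (t : ↥(𝒜 g) ⊗[ℤ] ↥(ℳ h))
    (ht : phiM 𝒜 ℳ g h t = 0) : t ∈ balancedRel 𝒜 ℳ g h := by
  rw [← Submodule.Quotient.mk_eq_zero]
  obtain ⟨Sf, rfl⟩ := TensorProduct.exists_finset t
  obtain ⟨l, hl⟩ := common_unit (g := g) hS (Sf.toList.map fun i => (i.1 : A))
    (by rintro s hs; obtain ⟨i, -, rfl⟩ := List.mem_map.1 hs; exact i.1.2)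
  have hunit : ∀ i ∈ Sf, (l.map pp).sum * (i.1 : A) = (i.1 : A) := fun i hi =>
    hl _ (List.mem_map_of_mem (Finset.mem_toList.2 hi))
  rw [← Submodule.mkQ_apply, map_sum]
  have step : ∀ i ∈ Sf, Submodule.mkQ (balancedRel 𝒜 ℳ g h) (i.1 ⊗ₜ[ℤ] i.2)
      = Psi g h l ⟨(i.1 : A) • (i.2 : M), smul_mem_gh i.1.2 i.2.2⟩ := by
    intro i hi
    have hi1 : i.1 = (⟨(l.map pp).sum * i.1.1, lsum_mul_mem l i.1.2⟩ : ↥(𝒜 g)) :=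
      Subtype.ext (hunit i hi).symm
    rw [Submodule.mkQ_apply]
    conv_lhs => rw [hi1]
    exact key_lemma l i.1 i.2
  rw [Finset.sum_congr rfl step, ← map_sum]
  have hzero : (∑ i ∈ Sf,
      (⟨(i.1 : A) • (i.2 : M), smul_mem_gh i.1.2 i.2.2⟩ : ↥(ℳ (g + h)))) = 0 := by
    refine Subtype.ext ?_
    rw [map_sum] at ht
    simpa using ht
  rw [hzero, map_zero]

lemma surj_aux (hS : IsNearlyEpsilonStrong 𝒜) (g h : G) :
    Function.Surjective (phibar 𝒜 ℳ hS g h) := by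
  rintro ⟨x, hx⟩
  have main : ∃ t, ((phibar 𝒜 ℳ hS g h t :
      ↥(prodSMul (𝒜 g * 𝒜 (-g)) (ℳ (g + h)))) : M) = x := by
    refine AddSubmonoid.smul_induction_on hx ?_ ?_
    · intro a ha n hn
      obtain ⟨l, rfl⟩ := memX_decomp ha
      clear ha
      induction l with
      | nil => exact ⟨0, by simp⟩
      | cons a l ih =>
        obtain ⟨t1, ht1⟩ := ih
        refine ⟨@HAdd.hAdd (tensorOverR 𝒜 ℳ g h) (tensorOverR 𝒜 ℳ g h) _ _ (Submodule.Quotient.mk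
          (a.1 ⊗ₜ[ℤ] (⟨a.2.1 • n, neg_smul_mem a.2.2 hn⟩ : ↥(ℳ h)))) t1, ?_⟩
        erw [map_add]
        push_cast
        rw [phibar_mk, phiM_tmul, ht1]
        simp [pp, add_smul, mul_smul]
    · rintro x y ⟨t1, ht1⟩ ⟨t2, ht2⟩
      exact ⟨t1 + t2, by rw [map_add]; push_cast; rw [ht1, ht2]⟩
  obtain ⟨t, ht⟩ := main
  exact ⟨t, Subtype.ext ht⟩

end Stmt5Aux

/-- If `S` is nearly epsilon-strongly graded, then for every graded
left `S`-module `M` and all `g, h`, the multiplication map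
`m_{g,h} : S_g ⊗_R M_h → (S_g S_{g⁻¹}) M_{gh}`, `s ⊗ m ↦ s m`, is an isomorphism of
left `R`-modules (`R = S_e`); the `R`-module structures are induced by multiplication,
so the isomorphism is recorded as an additive isomorphism given by multiplication on
simple tensors. -/
theorem multiplication_map_isomorphism_of_nearlyEpsilonStrong
    (hS : IsNearlyEpsilonStrong 𝒜) (g h : G) :
    ∃ e : tensorOverR 𝒜 ℳ g h ≃ₗ[ℤ] ↥(prodSMul (𝒜 g * 𝒜 (-g)) (ℳ (g + h))),
      ∀ (s : ↥(𝒜 g)) (m : ↥(ℳ h)),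
        ((e (Submodule.Quotient.mk (s ⊗ₜ[ℤ] m)) :
            ↥(prodSMul (𝒜 g * 𝒜 (-g)) (ℳ (g + h)))) : M) = s.1 • m.1 := by
  classical
  have hker : LinearMap.ker (Stmt5Aux.phibar 𝒜 ℳ hS g h) = ⊥ :=
    Submodule.ker_liftQ_eq_bot _ _ _
      (fun t ht => Stmt5Aux.inj_aux hS t (congrArg Subtype.val (LinearMap.mem_ker.1 ht)))
  refine ⟨LinearEquiv.ofBijective (Stmt5Aux.phibar 𝒜 ℳ hS g h)
    ⟨LinearMap.ker_eq_bot.1 hker, Stmt5Aux.surj_aux hS g h⟩, fun s m => rfl⟩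


end Stmt5
end Defs
end

section
/- A unital G-graded ring S is epsilon-strongly graded if and only if it is nearly epsilon-strongly graded and for every g ∈ G the left R-module S_g is finitely generated, where R = S_e. -/
open Pointwise

section Aux

variable {A : Type} [Ring A]

lemma mulSub_mem {S T : AddSubgroup A} {a b : A} (ha : a ∈ S) (hb : b ∈ T) :
    a * b ∈ S * T :=
  AddSubmonoid.mul_mem_mul ha hb

lemma exists_fin_decomp {S T : AddSubgroup A} {x : A} (hx : x ∈ S * T) :
    ∃ (n : ℕ) (a b : Fin n → A), (∀ i, a i ∈ S) ∧ (∀ i, b i ∈ T) ∧ x = ∑ i, a i * b i := by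
  have hx' : x ∈ S.toAddSubmonoid * T.toAddSubmonoid := hx
  refine AddSubmonoid.mul_induction_on hx' ?_ ?_
  · intro m hm n hn
    exact ⟨1, fun _ => m, fun _ => n, fun _ => hm, fun _ => hn, by simp⟩
  · rintro x y ⟨n₁, a₁, b₁, ha₁, hb₁, rfl⟩ ⟨n₂, a₂, b₂, ha₂, hb₂, rfl⟩
    refine ⟨n₁ + n₂, Fin.append a₁ a₂, Fin.append b₁ b₂, ?_, ?_, ?_⟩
    · intro i
      refine Fin.addCases (fun j => ?_) (fun j => ?_) i
      · rw [Fin.append_left]; exact ha₁ j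
      · rw [Fin.append_right]; exact ha₂ j
    · intro i
      refine Fin.addCases (fun j => ?_) (fun j => ?_) i
      · rw [Fin.append_left]; exact hb₁ j
      · rw [Fin.append_right]; exact hb₂ j
    · rw [Fin.sum_univ_add]
      simp [Fin.append_left, Fin.append_right]

lemma common_left_unit (I M : AddSubgroup A)
    (hIM : ∀ x ∈ I, ∀ m ∈ M, x * m ∈ M)
    (hII : ∀ x ∈ I, ∀ y ∈ I, x * y ∈ I)
    (hpt : ∀ m ∈ M, ∃ u ∈ I, u * m = m) :
    ∀ (n : ℕ) (f : Fin n → A), (∀ i, f i ∈ M) → ∃ u ∈ I, ∀ i, u * f i = f i := by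
  intro n
  induction n with
  | zero => exact fun f _ => ⟨0, I.zero_mem, fun i => i.elim0⟩
  | succ n ih =>
    intro f hf
    obtain ⟨u, hu, hufi⟩ := ih (fun i => f i.castSucc) (fun i => hf _)
    set m := f (Fin.last n) with hmdef
    have hm : m ∈ M := hf _
    obtain ⟨v, hv, hvm⟩ := hpt _ (M.sub_mem hm (hIM u hu m hm))
    refine ⟨u + v - v * u, I.sub_mem (I.add_mem hu hv) (hII v hv u hu), ?_⟩
    intro i
    refine Fin.lastCases ?_ (fun j => ?_) i
    · have expand : (u + v - v * u) * m = u * m + (v * m - v * (u * m)) := by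
        noncomm_ring
      rw [← hmdef, expand, ← mul_sub, hvm]
      abel
    · have h := hufi j
      have expand : (u + v - v * u) * f j.castSucc
          = u * f j.castSucc + v * f j.castSucc - v * (u * f j.castSucc) := by
        noncomm_ring
      rw [expand, h]
      abel

lemma common_right_unit (I M : AddSubgroup A)
    (hMI : ∀ m ∈ M, ∀ x ∈ I, m * x ∈ M)
    (hII : ∀ x ∈ I, ∀ y ∈ I, x * y ∈ I)
    (hpt : ∀ m ∈ M, ∃ v ∈ I, m * v = m) :
    ∀ (n : ℕ) (f : Fin n → A), (∀ i, f i ∈ M) → ∃ v ∈ I, ∀ i, f i * v = f i := by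
  intro n
  induction n with
  | zero => exact fun f _ => ⟨0, I.zero_mem, fun i => i.elim0⟩
  | succ n ih =>
    intro f hf
    obtain ⟨u, hu, hufi⟩ := ih (fun i => f i.castSucc) (fun i => hf _)
    set m := f (Fin.last n) with hmdef
    have hm : m ∈ M := hf _
    obtain ⟨v, hv, hvm⟩ := hpt _ (M.sub_mem hm (hMI m hm u hu))
    refine ⟨u + v - u * v, I.sub_mem (I.add_mem hu hv) (hII u hu v hv), ?_⟩
    intro i
    refine Fin.lastCases ?_ (fun j => ?_) i
    · have expand : m * (u + v - u * v) = m * u + (m * v - (m * u) * v) := by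
        noncomm_ring
      rw [← hmdef, expand, ← sub_mul, hvm]
      abel
    · have h := hufi j
      have expand : f j.castSucc * (u + v - u * v)
          = f j.castSucc * u + (f j.castSucc * v - (f j.castSucc * u) * v) := by
        noncomm_ring
      rw [expand, h]
      abel

lemma mem_grade_of_mem_mul {G : Type} [AddGroup G] [DecidableEq G]
    (𝒜 : G → AddSubgroup A) [GradedRing 𝒜] {g h : G} {x : A}
    (hx : x ∈ 𝒜 g * 𝒜 h) : x ∈ 𝒜 (g + h) := by
  have hx' : x ∈ (𝒜 g).toAddSubmonoid * (𝒜 h).toAddSubmonoid := hx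
  exact AddSubmonoid.mul_induction_on hx'
    (fun a ha b hb => SetLike.mul_mem_graded ha hb)
    (fun x y hx hy => add_mem hx hy)

end Aux


section Defs

variable {G : Type} [AddGroup G] [DecidableEq G]
variable {A : Type} [Ring A]
variable {M : Type} [AddCommGroup M] [Module A M]

variable (𝒜 : G → AddSubgroup A)

/-- A unital graded ring `S` is epsilon-strongly graded iff it is
nearly epsilon-strongly graded and each `S_g` is a finitely generated left
`R = S_e`-module. -/
theorem epsilonStrong_iff_nearlyEpsilonStrong_and_fg
    {G : Type} [AddGroup G] [DecidableEq G]
    {A : Type} [Ring A] (𝒜 : G → AddSubgroup A) [GradedRing 𝒜] :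
    (∃ ε : G → A, ∀ g : G, ε g ∈ 𝒜 g * 𝒜 (-g) ∧
        ∀ s ∈ 𝒜 g, ε g * s = s ∧ s * ε (-g) = s) ↔
      (IsNearlyEpsilonStrong 𝒜 ∧
        ∀ g : G, ∃ (n : ℕ) (t : Fin n → A), (∀ i, t i ∈ 𝒜 g) ∧
          ∀ s ∈ 𝒜 g, ∃ r : Fin n → A, (∀ i, r i ∈ 𝒜 0) ∧ s = ∑ i, r i * t i) := by
  constructor
  · rintro ⟨ε, hε⟩
    constructor
    · intro g s hs
      refine ⟨ε g, (hε g).1, ε (-g), ?_, ((hε g).2 s hs).1, ((hε g).2 s hs).2⟩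
      have h := (hε (-g)).1
      rwa [neg_neg] at h
    · intro g
      have h1 : ε (-g) ∈ 𝒜 (-g) * 𝒜 g := by
        have h := (hε (-g)).1
        rwa [neg_neg] at h
      obtain ⟨n, c, d, hc, hd, hsum⟩ := exists_fin_decomp h1
      refine ⟨n, d, hd, fun s hs => ⟨fun i => s * c i, fun i => ?_, ?_⟩⟩
      · have h := SetLike.mul_mem_graded hs (hc i)
        rwa [add_neg_cancel] at h
      · have h2 := ((hε g).2 s hs).2
        calc s = s * ε (-g) := h2.symm
          _ = ∑ i, s * c i * d i := by
              rw [hsum, Finset.mul_sum]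
              exact Finset.sum_congr rfl fun i _ => by rw [mul_assoc]
  · rintro ⟨hN, hF⟩
    have key : ∀ g : G, ∃ e ∈ 𝒜 g * 𝒜 (-g),
        (∀ s ∈ 𝒜 g, e * s = s) ∧ (∀ s ∈ 𝒜 (-g), s * e = s) := by
      intro g
      have mem0 : ∀ x ∈ 𝒜 g * 𝒜 (-g), x ∈ 𝒜 (0 : G) := by
        intro x hx
        have h := mem_grade_of_mem_mul 𝒜 hx
        rwa [add_neg_cancel] at h
      have hIM : ∀ x ∈ 𝒜 g * 𝒜 (-g), ∀ m ∈ 𝒜 g, x * m ∈ 𝒜 g := by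
        intro x hx m hm
        have h := SetLike.mul_mem_graded (mem0 x hx) hm
        rwa [zero_add] at h
      have hMI : ∀ m ∈ 𝒜 (-g), ∀ x ∈ 𝒜 g * 𝒜 (-g), m * x ∈ 𝒜 (-g) := by
        intro m hm x hx
        have h := SetLike.mul_mem_graded hm (mem0 x hx)
        rwa [add_zero] at h
      have hII : ∀ x ∈ 𝒜 g * 𝒜 (-g), ∀ y ∈ 𝒜 g * 𝒜 (-g), x * y ∈ 𝒜 g * 𝒜 (-g) := by
        intro x hx y hy
        obtain ⟨m, a, b, ha, hb, rfl⟩ := exists_fin_decomp hy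
        rw [Finset.mul_sum]
        refine AddSubgroup.sum_mem _ fun i _ => ?_
        rw [← mul_assoc]
        exact mulSub_mem (hIM x hx _ (ha i)) (hb i)
      have hptL : ∀ m ∈ 𝒜 g, ∃ u ∈ 𝒜 g * 𝒜 (-g), u * m = m := by
        intro m hm
        obtain ⟨u, hu, v, hv, h1, h2⟩ := hN g m hm
        exact ⟨u, hu, h1⟩
      have hptR : ∀ m ∈ 𝒜 (-g), ∃ v ∈ 𝒜 g * 𝒜 (-g), m * v = m := by
        intro m hm
        obtain ⟨u, hu, v, hv, h1, h2⟩ := hN (-g) m hm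
        rw [neg_neg] at hv
        exact ⟨v, hv, h2⟩
      obtain ⟨n, t', ht', hspan⟩ := hF (-g)
      obtain ⟨e, he, het⟩ :=
        common_right_unit (𝒜 g * 𝒜 (-g)) (𝒜 (-g)) hMI hII hptR n t' ht'
      have hR : ∀ s ∈ 𝒜 (-g), s * e = s := by
        intro s hs
        obtain ⟨r, hr, rfl⟩ := hspan s hs
        rw [Finset.sum_mul]
        exact Finset.sum_congr rfl fun i _ => by rw [mul_assoc, het i]
      have hRI : ∀ x ∈ 𝒜 g * 𝒜 (-g), x * e = x := by
        intro x hx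
        obtain ⟨m, a, b, ha, hb, rfl⟩ := exists_fin_decomp hx
        rw [Finset.sum_mul]
        exact Finset.sum_congr rfl fun i _ => by rw [mul_assoc, hR _ (hb i)]
      have hLI : ∀ x ∈ 𝒜 g * 𝒜 (-g), e * x = x := by
        intro x hx
        have hz : x - e * x ∈ 𝒜 g * 𝒜 (-g) :=
          (𝒜 g * 𝒜 (-g)).sub_mem hx (hII e he x hx)
        obtain ⟨w, hw, hwx⟩ : ∃ w ∈ 𝒜 g * 𝒜 (-g), w * (x - e * x) = x - e * x := by
          obtain ⟨m, a, b, ha, hb, hdecomp⟩ := exists_fin_decomp hz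
          obtain ⟨w, hw, hwa⟩ :=
            common_left_unit (𝒜 g * 𝒜 (-g)) (𝒜 g) hIM hII hptL m a ha
          refine ⟨w, hw, ?_⟩
          rw [hdecomp, Finset.mul_sum]
          exact Finset.sum_congr rfl fun i _ => by rw [← mul_assoc, hwa i]
        have hwe : w * e = w := hRI w hw
        have h0 : w * (x - e * x) = 0 := by
          rw [mul_sub, ← mul_assoc, hwe, sub_self]
        have hz0 : x - e * x = 0 := by rw [← hwx, h0]
        exact (sub_eq_zero.mp hz0).symm
      have hL : ∀ s ∈ 𝒜 g, e * s = s := by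
        intro s hs
        obtain ⟨u, hu, hus⟩ := hptL s hs
        rw [← hus, ← mul_assoc, hLI u hu]
      exact ⟨e, he, hL, hR⟩
    choose ε hmem h using key
    refine ⟨ε, fun g => ⟨hmem g, fun s hs => ⟨(h g).1 s hs, ?_⟩⟩⟩
    have h2 := (h (-g)).2 s
    rw [neg_neg] at h2
    exact h2 hs
end Defs
end

section
/- Let S be a G-graded ring. Then S is strongly graded if and only if S is symmetrically graded and for every g ∈ G the only symmetrically graded left S-module M with M_g = 0 is the zero module. -/
open Pointwise

set_option maxHeartbeats 1000000
set_option synthInstance.maxHeartbeats 400000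

open Pointwise

namespace StrongAux

open DirectSum

variable {G : Type} [AddGroup G] [DecidableEq G]
variable {A : Type} [Ring A]

theorem sg_mul_mem {M N : AddSubgroup A} {m n : A} (hm : m ∈ M) (hn : n ∈ N) :
    m * n ∈ M * N :=
  AddSubmonoid.mul_mem_mul hm hn

theorem sg_mul_le {M N P : AddSubgroup A} (h : ∀ m ∈ M, ∀ n ∈ N, m * n ∈ P) :
    M * N ≤ P := fun _x hx =>
  AddSubmonoid.mul_induction_on hx h fun _ _ => add_mem

theorem sg_mul_induction {M N : AddSubgroup A} {C : A → Prop} {x : A} (hx : x ∈ M * N)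
    (hm : ∀ m ∈ M, ∀ n ∈ N, C (m * n)) (ha : ∀ x y, C x → C y → C (x + y)) : C x :=
  AddSubmonoid.mul_induction_on hx hm ha

variable (𝒜 : G → AddSubgroup A) [GradedRing 𝒜] (g : G)

def J : Submodule A A := Submodule.span A ((𝒜 (-g) * 𝒜 g : AddSubgroup A) : Set A)

theorem gen_subset_zero : (𝒜 (-g) * 𝒜 g : AddSubgroup A) ≤ 𝒜 0 :=
  sg_mul_le fun m hm n hn => by
    have := SetLike.mul_mem_graded hm hn
    rwa [neg_add_cancel] at this

theorem mul_gen_le (k : G) :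
    (𝒜 k * (𝒜 (-g) * 𝒜 g) : AddSubgroup A) ≤ (J 𝒜 g).toAddSubgroup :=
  sg_mul_le fun s _hs t ht => by
    have : s • t ∈ J 𝒜 g := Submodule.smul_mem _ s (Submodule.subset_span ht)
    simpa [smul_eq_mul] using this

theorem zero_mul_gen_le :
    (𝒜 0 * (𝒜 (-g) * 𝒜 g) : AddSubgroup A) ≤ (𝒜 (-g) * 𝒜 g : AddSubgroup A) :=
  sg_mul_le fun s hs t ht =>
    sg_mul_induction (C := fun y => s * y ∈ (𝒜 (-g) * 𝒜 g : AddSubgroup A)) ht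
      (fun u hu v hv => by
        show s * (u * v) ∈ _
        rw [← mul_assoc]
        refine sg_mul_mem ?_ hv
        have := SetLike.mul_mem_graded hs hu
        rwa [zero_add] at this)
      (fun p q hp hq => by show s * (p + q) ∈ _; rw [mul_add]; exact add_mem hp hq)

theorem decompose_J_mem {x : A} (hx : x ∈ J 𝒜 g) (k : G) :
    (DirectSum.decompose 𝒜 x k : A) ∈ (𝒜 k * (𝒜 (-g) * 𝒜 g) : AddSubgroup A) := by
  classical
  revert k
  refine Submodule.span_induction
    (p := fun y _ => ∀ k : G,
      (DirectSum.decompose 𝒜 y k : A) ∈ (𝒜 k * (𝒜 (-g) * 𝒜 g) : AddSubgroup A))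
    ?_ ?_ ?_ ?_ hx
  · intro t ht k
    have ht' : t ∈ (𝒜 (-g) * 𝒜 g : AddSubgroup A) := ht
    have ht0 : t ∈ 𝒜 0 := gen_subset_zero 𝒜 g ht'
    by_cases hk : k = 0
    · subst hk
      rw [DirectSum.decompose_of_mem_same 𝒜 ht0]
      exact one_mul t ▸ sg_mul_mem (SetLike.one_mem_graded 𝒜) ht'
    · rw [DirectSum.decompose_of_mem_ne 𝒜 ht0 (Ne.symm hk)]
      exact zero_mem _
  · intro k
    simp only [DirectSum.decompose_zero, DirectSum.zero_apply, ZeroMemClass.coe_zero]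
    exact zero_mem _
  · intro x y _ _ ihx ihy k
    rw [DirectSum.decompose_add, DirectSum.add_apply]
    push_cast
    exact add_mem (ihx k) (ihy k)
  · intro r y _ ihy k
    rw [smul_eq_mul, DirectSum.decompose_mul, DirectSum.coe_mul_apply]
    refine sum_mem fun ij hij => ?_
    have hk : ij.1 + ij.2 = k := (Finset.mem_filter.mp hij).2
    refine sg_mul_induction
      (C := fun z => (DirectSum.decompose 𝒜 r ij.1 : A) * z ∈
        (𝒜 k * (𝒜 (-g) * 𝒜 g) : AddSubgroup A)) (ihy ij.2)
      (fun s hs t ht => ?_)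
      (fun p q hp hq => by
        show _ * (p + q) ∈ _
        rw [mul_add]; exact add_mem hp hq)
    show _ * (s * t) ∈ _
    rw [← mul_assoc]
    exact sg_mul_mem (hk ▸ SetLike.mul_mem_graded (SetLike.coe_mem _) hs) ht

def Mgr (k : G) : AddSubgroup (A ⧸ J 𝒜 g) := (𝒜 k).map (J 𝒜 g).mkQ.toAddMonoidHom

instance : SetLike.GradedSMul 𝒜 (Mgr 𝒜 g) where
  smul_mem := by
    rintro i j ai bj hi ⟨b, hb, rfl⟩
    refine ⟨ai * b, SetLike.mul_mem_graded hi hb, ?_⟩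
    show (J 𝒜 g).mkQ (ai * b) = ai • (J 𝒜 g).mkQ b
    rw [← smul_eq_mul, map_smul]

def restr (k : G) : 𝒜 k →+ Mgr 𝒜 g k where
  toFun x := ⟨(J 𝒜 g).mkQ x, x, x.2, rfl⟩
  map_zero' := Subtype.ext (by simp)
  map_add' x y := Subtype.ext (by simp)

@[simp] theorem restr_coe (k : G) (x : 𝒜 k) :
    (restr 𝒜 g k x : A ⧸ J 𝒜 g) = (J 𝒜 g).mkQ x := rfl

def Fq : (⨁ k, 𝒜 k) →+ ⨁ k, Mgr 𝒜 g k := DFinsupp.mapRange.addMonoidHom (restr 𝒜 g)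

theorem Fq_apply (y : ⨁ k, 𝒜 k) (k : G) : Fq 𝒜 g y k = restr 𝒜 g k (y k) :=
  DFinsupp.mapRange_apply (fun i => ⇑(restr 𝒜 g i)) (fun i => (restr 𝒜 g i).map_zero) y k

theorem Fq_of (k : G) (x : 𝒜 k) :
    Fq 𝒜 g (DirectSum.of _ k x) = DirectSum.of _ k (restr 𝒜 g k x) := by
  refine DFunLike.ext _ _ fun j => ?_
  rw [Fq_apply]
  by_cases h : k = j
  · subst h; rw [DirectSum.of_eq_same, DirectSum.of_eq_same]
  · rw [DirectSum.of_eq_of_ne _ _ _ (Ne.symm h), DirectSum.of_eq_of_ne _ _ _ (Ne.symm h), map_zero]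

theorem Fq_decompose_eq_zero {x : A} (hx : x ∈ J 𝒜 g) :
    Fq 𝒜 g (DirectSum.decompose 𝒜 x) = 0 := by
  refine DFunLike.ext _ _ fun k => ?_
  rw [Fq_apply]
  refine Subtype.ext ?_
  rw [restr_coe, Submodule.mkQ_apply, (Submodule.Quotient.mk_eq_zero _).mpr
    (mul_gen_le 𝒜 g k (decompose_J_mem 𝒜 g hx k)), DirectSum.zero_apply,
    ZeroMemClass.coe_zero]

def decompQ : (A ⧸ J 𝒜 g) →+ ⨁ k, Mgr 𝒜 g k where
  toFun m := Quotient.liftOn' m (fun a => Fq 𝒜 g (DirectSum.decompose 𝒜 a)) fun a b hab => by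
    have hab' : a - b ∈ J 𝒜 g := (Submodule.quotientRel_def _).mp hab
    have h0 := Fq_decompose_eq_zero 𝒜 g hab'
    rw [DirectSum.decompose_sub, map_sub, sub_eq_zero] at h0
    exact h0
  map_zero' := by
    have : (0 : A ⧸ J 𝒜 g) = Submodule.Quotient.mk 0 := (Submodule.Quotient.mk_zero _).symm
    rw [this]
    show Fq 𝒜 g (DirectSum.decompose 𝒜 0) = 0
    rw [DirectSum.decompose_zero, map_zero]
  map_add' := by
    intro m n
    refine Quotient.inductionOn₂' m n fun a b => ?_
    rw [show (Quotient.mk'' a : A ⧸ J 𝒜 g) = Submodule.Quotient.mk a from rfl,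
      show (Quotient.mk'' b : A ⧸ J 𝒜 g) = Submodule.Quotient.mk b from rfl,
      ← Submodule.Quotient.mk_add]
    show Fq 𝒜 g (DirectSum.decompose 𝒜 (a + b)) =
      Fq 𝒜 g (DirectSum.decompose 𝒜 a) + Fq 𝒜 g (DirectSum.decompose 𝒜 b)
    rw [DirectSum.decompose_add, map_add]

theorem decompQ_mkQ (a : A) :
    decompQ 𝒜 g ((J 𝒜 g).mkQ a) = Fq 𝒜 g (DirectSum.decompose 𝒜 a) := rfl

theorem coe_Fq (y : ⨁ k, 𝒜 k) :
    DirectSum.coeAddMonoidHom (Mgr 𝒜 g) (Fq 𝒜 g y) =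
      (J 𝒜 g).mkQ (DirectSum.coeAddMonoidHom 𝒜 y) := by
  induction y using DirectSum.induction_on with
  | zero => simp
  | of k x =>
    rw [Fq_of, DirectSum.coeAddMonoidHom_of, DirectSum.coeAddMonoidHom_of, restr_coe]
  | add x y ihx ihy =>
    rw [map_add, map_add, ihx, ihy, ← map_add]
    exact congrArg _ (map_add _ x y).symm

instance : DirectSum.Decomposition (Mgr 𝒜 g) where
  decompose' := decompQ 𝒜 g
  left_inv m := by
    obtain ⟨a, rfl⟩ := (J 𝒜 g).mkQ_surjective m
    rw [decompQ_mkQ, coe_Fq]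
    congr 1
    exact (DirectSum.decompose 𝒜).symm_apply_apply a
  right_inv y := by
    induction y using DirectSum.induction_on with
    | zero => rw [map_zero, map_zero]
    | of k m =>
      obtain ⟨a, ha, hm⟩ := m.2
      rw [DirectSum.coeAddMonoidHom_of]
      have hval : (m : A ⧸ J 𝒜 g) = (J 𝒜 g).mkQ a := hm.symm
      rw [hval, decompQ_mkQ, DirectSum.decompose_of_mem 𝒜 ha, Fq_of]
      exact congrArg _ (Subtype.ext (by rw [restr_coe]; exact hval.symm))
    | add x y ihx ihy => rw [map_add, map_add, ihx, ihy]

end StrongAux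


section Main

open DirectSum StrongAux

/-- `S` is strongly graded iff `S` is symmetrically graded and for
every `g` the only symmetrically graded left `S`-module `M` with `M_g = 0` is the
zero module. -/
theorem stronglyGraded_iff_symmetricallyGraded_and_no_torsion
    {G : Type} [AddGroup G] [DecidableEq G]
    {A : Type} [Ring A] (𝒜 : G → AddSubgroup A) [GradedRing 𝒜] :
    (∀ g h : G, 𝒜 g * 𝒜 h = 𝒜 (g + h)) ↔
      (IsSymmetricallyGraded 𝒜 ∧
        ∀ g : G, ∀ (M : Type) [AddCommGroup M] [Module A M]
          (ℳ : G → AddSubgroup M) [SetLike.GradedSMul 𝒜 ℳ] [DirectSum.Decomposition ℳ],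
          (∀ k : G, ℳ k = prodSMul (𝒜 k * 𝒜 (-k)) (ℳ k)) →
          ℳ g = ⊥ → ∀ k : G, ℳ k = ⊥) := by
  classical
  constructor
  · intro hst
    constructor
    · intro g
      rw [hst g (-g), add_neg_cancel, hst 0 g, zero_add]
    · intro g M _ _ ℳ _ _ hsym hg k
      rw [hsym k]
      have h0 : (𝒜 k * 𝒜 (-k) : AddSubgroup A) = 𝒜 0 := by rw [hst, add_neg_cancel]
      have hsplit : (𝒜 0 : AddSubgroup A) = 𝒜 (k + -g) * 𝒜 (g + -k) := by
        have hzero : k + -g + (g + -k) = 0 := by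
          rw [add_assoc, neg_add_cancel_left, add_neg_cancel]
        rw [hst, hzero]
      rw [h0, hsplit]
      refine eq_bot_iff.mpr fun m hm => ?_
      rw [AddSubgroup.mem_bot]
      refine AddSubmonoid.smul_induction_on hm (fun a ha n hn => ?_)
        (fun x y hx hy => by rw [hx, hy, add_zero])
      refine sg_mul_induction (C := fun y => y • n = 0) ha (fun s hs t ht => ?_)
        (fun p q hp hq => by show (p + q) • n = 0; rw [add_smul, hp, hq, add_zero])
      have h1 : t • n ∈ ℳ ((g + -k) + k) :=
        SetLike.GradedSMul.smul_mem (A := 𝒜) (B := ℳ) ht (show n ∈ ℳ k from hn)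
      rw [neg_add_cancel_right, hg, AddSubgroup.mem_bot] at h1
      show (s * t) • n = 0
      rw [mul_smul, h1, smul_zero]
  · rintro ⟨hsymm, hmod⟩
    have hone : ∀ g : G, (1 : A) ∈ (𝒜 (-g) * 𝒜 g : AddSubgroup A) := by
      intro g
      have hsymmod : ∀ k : G, Mgr 𝒜 g k = prodSMul (𝒜 k * 𝒜 (-k)) (Mgr 𝒜 g k) := by
        intro k
        refine le_antisymm ?_ ?_
        · rintro m ⟨x, hx, rfl⟩
          have hx' : x ∈ (𝒜 k * 𝒜 (-k) * 𝒜 k : AddSubgroup A) := by rw [hsymm k]; exact hx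
          refine sg_mul_induction
            (C := fun y => (J 𝒜 g).mkQ.toAddMonoidHom y ∈
              prodSMul (𝒜 k * 𝒜 (-k)) (Mgr 𝒜 g k)) hx' ?_ ?_
          · intro u hu v hv
            have heq : (J 𝒜 g).mkQ.toAddMonoidHom (u * v) = u • (J 𝒜 g).mkQ v := by
              show (J 𝒜 g).mkQ (u * v) = u • (J 𝒜 g).mkQ v
              rw [← smul_eq_mul, map_smul]
            rw [heq]
            exact AddSubmonoid.smul_mem_smul hu ⟨v, hv, rfl⟩
          · intro p q hp hq
            rw [map_add]
            exact add_mem hp hq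
        · intro m hm
          refine AddSubmonoid.smul_induction_on hm (fun a ha n hn => ?_)
            fun x y hx hy => add_mem hx hy
          have ha0 : a ∈ 𝒜 0 := sg_mul_le (fun u hu v hv => by
            have := SetLike.mul_mem_graded hu hv
            rwa [add_neg_cancel] at this) ha
          have hsm : a • n ∈ Mgr 𝒜 g (0 + k) :=
            SetLike.GradedSMul.smul_mem (A := 𝒜) (B := Mgr 𝒜 g) ha0
              (show n ∈ Mgr 𝒜 g k from hn)
          rwa [zero_add] at hsm
      have hgbot : Mgr 𝒜 g g = ⊥ := by
        refine eq_bot_iff.mpr ?_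
        rintro m ⟨x, hx, rfl⟩
        rw [AddSubgroup.mem_bot]
        have hx' : x ∈ (𝒜 g * 𝒜 (-g) * 𝒜 g : AddSubgroup A) := by rw [hsymm g]; exact hx
        have hxJ : x ∈ J 𝒜 g := by
          refine sg_mul_induction (C := fun y => y ∈ J 𝒜 g) hx' ?_
            fun p q hp hq => add_mem hp hq
          intro u hu v hv
          refine sg_mul_induction (C := fun y => y * v ∈ J 𝒜 g) hu ?_ ?_
          · intro s hs t ht
            show s * t * v ∈ J 𝒜 g
            rw [mul_assoc]
            have htv : t * v ∈ J 𝒜 g := Submodule.subset_span (sg_mul_mem ht hv)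
            have := Submodule.smul_mem (J 𝒜 g) s htv
            rwa [smul_eq_mul] at this
          · intro p q hp hq
            show (p + q) * v ∈ J 𝒜 g
            rw [add_mul]
            exact add_mem hp hq
        show (J 𝒜 g).mkQ x = 0
        rw [Submodule.mkQ_apply, Submodule.Quotient.mk_eq_zero]
        exact hxJ
      have hbot := hmod g (A ⧸ J 𝒜 g) (Mgr 𝒜 g) hsymmod hgbot 0
      have h1 : (1 : A) ∈ J 𝒜 g := by
        have hmem : (J 𝒜 g).mkQ.toAddMonoidHom 1 ∈ Mgr 𝒜 g 0 :=
          AddSubgroup.mem_map_of_mem _ (SetLike.one_mem_graded 𝒜)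
        rw [hbot, AddSubgroup.mem_bot] at hmem
        rwa [show (J 𝒜 g).mkQ.toAddMonoidHom (1 : A) = Submodule.Quotient.mk 1 from rfl,
          Submodule.Quotient.mk_eq_zero] at hmem
      have h2 := decompose_J_mem 𝒜 g h1 0
      rw [DirectSum.decompose_of_mem_same 𝒜 (SetLike.one_mem_graded 𝒜)] at h2
      exact zero_mul_gen_le 𝒜 g h2
    intro g h
    refine le_antisymm (sg_mul_le fun m hm n hn => ?_) ?_
    · have := SetLike.mul_mem_graded hm hn
      exact this
    · intro x hx
      have h1 : (1 : A) ∈ (𝒜 g * 𝒜 (-g) : AddSubgroup A) := by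
        have := hone (-g)
        rwa [neg_neg] at this
      have hx1 : (1 : A) * x ∈ (𝒜 g * 𝒜 h : AddSubgroup A) := by
        refine sg_mul_induction (C := fun y => y * x ∈ (𝒜 g * 𝒜 h : AddSubgroup A)) h1 ?_ ?_
        · intro u hu v hv
          show u * v * x ∈ _
          rw [mul_assoc]
          have hvx : v * x ∈ 𝒜 h := by
            have := SetLike.mul_mem_graded hv hx
            rwa [neg_add_cancel_left] at this
          exact sg_mul_mem hu hvx
        · intro p q hp hq
          show (p + q) * x ∈ _
          rw [add_mul]
          exact add_mem hp hq
      rwa [one_mul] at hx1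

end Main
end

section
/- Let S be a symmetrically graded ring, M a symmetrically graded left S-module, and h ∈ G. Then the graded submodule S M_h (with (S M_h)_g = S_{g h⁻¹} M_h) has symmetrically graded quotient M/(S M_h), and (M/(S M_h))_h = 0. -/
open Pointwise

section Defs

variable {G : Type} [AddGroup G] [DecidableEq G]
variable {A : Type} [Ring A]
variable {M : Type} [AddCommGroup M] [Module A M]

variable (𝒜 : G → AddSubgroup A)

lemma piece_of_iSup {G M : Type} [DecidableEq G] [AddCommGroup M]
    (ℳ : G → AddSubgroup M) [DirectSum.Decomposition ℳ]
    (N : G → AddSubgroup M) (hN : ∀ k, N k ≤ ℳ k) (g : G) :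
    (⨆ k, N k) ⊓ ℳ g ≤ N g := by
  rintro x ⟨hx1, hx2⟩
  have key : ∀ y, y ∈ ⨆ k, N k → ((DirectSum.decompose ℳ y g : ℳ g) : M) ∈ N g := by
    intro y hy
    refine AddSubgroup.iSup_induction
      (C := fun y => ((DirectSum.decompose ℳ y g : ℳ g) : M) ∈ N g) N hy
      (fun k z hz => ?_) (by simpa using zero_mem (N g)) ?_
    · show ((DirectSum.decompose ℳ z g : ℳ g) : M) ∈ N g
      by_cases hkg : k = g
      · subst hkg; rw [DirectSum.decompose_of_mem_same ℳ (hN k hz)]; exact hz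
      · rw [DirectSum.decompose_of_mem_ne ℳ (hN k hz) hkg]; exact zero_mem _
    · intro a b ha hb
      show ((DirectSum.decompose ℳ (a + b) g : ℳ g) : M) ∈ N g
      rw [DirectSum.decompose_add, DirectSum.add_apply, AddSubgroup.coe_add]
      exact add_mem ha hb
  have := key x hx1
  rwa [DirectSum.decompose_of_mem_same ℳ hx2] at this

lemma prodSMul_mono_left {A : Type} [Ring A]
    {M : Type} [AddCommGroup M] [Module A M]
    {S S' : AddSubgroup A} (hSS : S ≤ S') (N : AddSubgroup M) :
    prodSMul S N ≤ prodSMul S' N := by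
  intro x hx
  refine AddSubmonoid.smul_induction_on hx (fun a ha m hm => ?_)
    (fun u v hu hv => add_mem hu hv)
  exact AddSubmonoid.smul_mem_smul (hSS ha) hm

/-- Let `S` be symmetrically graded and `M` a symmetrically graded
left `S`-module, `h ∈ G`. Then the graded submodule `S M_h` (with
`(S M_h)_g = S_{g h⁻¹} M_h`) satisfies: the quotient `M/(S M_h)` is symmetrically
graded and its `h`-component vanishes. -/
theorem quotient_by_SMh_symmetrically_graded
    {G : Type} [AddGroup G] [DecidableEq G]
    {A : Type} [Ring A] (𝒜 : G → AddSubgroup A) [GradedRing 𝒜]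
    (hS : IsSymmetricallyGraded 𝒜)
    {M : Type} [AddCommGroup M] [Module A M]
    (ℳ : G → AddSubgroup M) [SetLike.GradedSMul 𝒜 ℳ] [DirectSum.Decomposition ℳ]
    (hM : ∀ g : G, ℳ g = prodSMul (𝒜 g * 𝒜 (-g)) (ℳ g))
    (h : G) :
    -- `S M_h` is a graded submodule: its `g`-component is `S_{g h⁻¹} M_h`
    (∀ g : G, (⨆ k : G, prodSMul (𝒜 (k + -h)) (ℳ h)) ⊓ ℳ g
        = prodSMul (𝒜 (g + -h)) (ℳ h)) ∧
    -- the quotient `M/(S M_h)` is symmetrically graded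
    (∀ g : G, ℳ g ≤ prodSMul (𝒜 g * 𝒜 (-g)) (ℳ g)
        ⊔ ⨆ k : G, prodSMul (𝒜 (k + -h)) (ℳ h)) ∧
    -- and `(M/(S M_h))_h = 0`
    ℳ h ≤ ⨆ k : G, prodSMul (𝒜 (k + -h)) (ℳ h) := by
  classical
  set N : G → AddSubgroup M := fun k => prodSMul (𝒜 (k + -h)) (ℳ h) with hNdef
  have hmul0 : ∀ k : G, 𝒜 k * 𝒜 (-k) ≤ 𝒜 (k + -k) := by
    intro k x hx
    refine AddSubmonoid.mul_induction_on hx (fun a ha b hb => ?_)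
      (fun u v hu hv => add_mem hu hv)
    exact SetLike.GradedMul.mul_mem ha hb
  have hNle : ∀ k, N k ≤ ℳ k := by
    intro k x hx
    refine AddSubmonoid.smul_induction_on hx (fun a ha m hm => ?_)
      (fun u v hu hv => add_mem hu hv)
    have := SetLike.GradedSMul.smul_mem (A := 𝒜) (B := ℳ) ha hm
    rwa [show (k + -h) +ᵥ h = k from neg_add_cancel_right k h] at this
  have part3 : ℳ h ≤ ⨆ k, N k := by
    intro x hx
    rw [hM h] at hx
    exact le_iSup N h (prodSMul_mono_left (hmul0 h) (ℳ h) hx)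
  refine ⟨fun g => ?_, fun g => ?_, part3⟩
  · exact le_antisymm (piece_of_iSup ℳ N hNle g)
      (le_inf (le_iSup N g) (hNle g))
  · exact (hM g).le.trans le_sup_left
end Defs
end

section
/- Let S be a unital epsilon-strongly G-graded ring, and let r be a minimal nonzero element of the boolean semigroup generated by {ε_g : g ∈ G}. If r is γ-invariant (γ_g(r ε_{g⁻¹}) = r ε_g for all g), then r lies in the center Z(S). -/
open Pointwise

section Defs

variable {G : Type} [AddGroup G] [DecidableEq G]
variable {A : Type} [Ring A]
variable {M : Type} [AddCommGroup M] [Module A M]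

variable (𝒜 : G → AddSubgroup A)

/-- If `r` is a minimal nonzero element of the boolean semigroup
generated by the `ε_g`'s and `r` is `γ`-invariant, then `r` is central in `S`. -/
theorem central_of_gamma_invariant
    {G : Type} [AddGroup G] [DecidableEq G]
    {A : Type} [Ring A] (𝒜 : G → AddSubgroup A) [GradedRing 𝒜]
    (ε : G → A)
    (hmem : ∀ g : G, ε g ∈ 𝒜 g * 𝒜 (-g))
    (hunit : ∀ g : G, ∀ s ∈ 𝒜 g, ε g * s = s ∧ s * ε (-g) = s)
    (n : G → ℕ) (u v : (g : G) → Fin (n g) → A)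
    (hu : ∀ g i, u g i ∈ 𝒜 g) (hv : ∀ g i, v g i ∈ 𝒜 (-g))
    (hsum : ∀ g : G, ∑ i, u g i * v g i = ε g)
    (r : A)
    (hrB : r ∈ Subsemigroup.closure (Set.range ε))
    (hr0 : r ≠ 0)
    (hmin : ∀ a ∈ Subsemigroup.closure (Set.range ε), a ≠ 0 → a * r = a → a = r)
    (hinv : ∀ g : G, ∑ i, u g i * (r * ε (-g)) * v g i = r * ε g) :
    ∀ x : A, r * x = x * r := by
  classical
  -- ε g is a left identity on 𝒜 g * 𝒜 (-g)
  have hleft : ∀ g : G, ∀ z ∈ 𝒜 g * 𝒜 (-g), ε g * z = z := by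
    intro g z hz
    rw [← AddSubgroup.mem_toAddSubmonoid, AddSubgroup.mul_toAddSubmonoid] at hz
    refine AddSubmonoid.mul_induction_on hz (fun a ha b hb => ?_) (fun x y hx hy => ?_)
    · rw [← mul_assoc, (hunit g a ha).1]
    · rw [mul_add, hx, hy]
  -- ε g is a right identity on 𝒜 g * 𝒜 (-g)
  have hright : ∀ g : G, ∀ z ∈ 𝒜 g * 𝒜 (-g), z * ε g = z := by
    intro g z hz
    rw [← AddSubgroup.mem_toAddSubmonoid, AddSubgroup.mul_toAddSubmonoid] at hz
    refine AddSubmonoid.mul_induction_on hz (fun a ha b hb => ?_) (fun x y hx hy => ?_)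
    · have := (hunit (-g) b hb).2
      rw [neg_neg] at this
      rw [mul_assoc, this]
    · rw [add_mul, hx, hy]
  -- products with 𝒜 0 stay in 𝒜 g * 𝒜 (-g)
  have hIr : ∀ g : G, ∀ z ∈ 𝒜 g * 𝒜 (-g), ∀ x ∈ 𝒜 (0:G), z * x ∈ 𝒜 g * 𝒜 (-g) := by
    intro g z hz x hx
    rw [← AddSubgroup.mem_toAddSubmonoid, AddSubgroup.mul_toAddSubmonoid] at hz ⊢
    refine AddSubmonoid.mul_induction_on hz (fun a ha b hb => ?_) (fun y y' hy hy' => ?_)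
    · rw [mul_assoc]
      have hbx : b * x ∈ 𝒜 (-g) := by
        have := SetLike.mul_mem_graded (A := 𝒜) hb hx
        rwa [add_zero] at this
      exact AddSubmonoid.mul_mem_mul ha hbx
    · rw [add_mul]; exact AddSubmonoid.add_mem _ hy hy'
  have hIl : ∀ g : G, ∀ z ∈ 𝒜 g * 𝒜 (-g), ∀ x ∈ 𝒜 (0:G), x * z ∈ 𝒜 g * 𝒜 (-g) := by
    intro g z hz x hx
    rw [← AddSubgroup.mem_toAddSubmonoid, AddSubgroup.mul_toAddSubmonoid] at hz ⊢
    refine AddSubmonoid.mul_induction_on hz (fun a ha b hb => ?_) (fun y y' hy hy' => ?_)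
    · rw [← mul_assoc]
      have hxa : x * a ∈ 𝒜 g := by
        have := SetLike.mul_mem_graded (A := 𝒜) hx ha
        rwa [zero_add] at this
      exact AddSubmonoid.mul_mem_mul hxa hb
    · rw [mul_add]; exact AddSubmonoid.add_mem _ hy hy'
  -- ε g ∈ 𝒜 0
  have hε0 : ∀ g : G, ε g ∈ 𝒜 (0:G) := by
    intro g
    have hz := hmem g
    rw [← AddSubgroup.mem_toAddSubmonoid, AddSubgroup.mul_toAddSubmonoid] at hz
    refine AddSubmonoid.mul_induction_on hz (fun a ha b hb => ?_) (fun y y' hy hy' => ?_)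
    · have := SetLike.mul_mem_graded (A := 𝒜) ha hb
      rwa [add_neg_cancel] at this
    · exact AddSubgroup.add_mem _ hy hy'
  -- ε g commutes with every element of 𝒜 0
  have hεcomm : ∀ g : G, ∀ x ∈ 𝒜 (0:G), ε g * x = x * ε g := by
    intro g x hx
    have h1 : ε g * x = ε g * x * ε g := (hright g _ (hIr g _ (hmem g) x hx)).symm
    have h2 : x * ε g = ε g * (x * ε g) := (hleft g _ (hIl g _ (hmem g) x hx)).symm
    rw [h1, h2, mul_assoc]
  -- r ∈ 𝒜 0 and r commutes with every element of 𝒜 0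
  have hr : r ∈ 𝒜 (0:G) ∧ ∀ x ∈ 𝒜 (0:G), r * x = x * r := by
    refine Subsemigroup.closure_induction (p := fun a _ => a ∈ 𝒜 (0:G) ∧ ∀ x ∈ 𝒜 (0:G), a * x = x * a)
      ?_ ?_ hrB
    · rintro a ⟨g, rfl⟩
      exact ⟨hε0 g, hεcomm g⟩
    · rintro a b _ _ ⟨ha0, hac⟩ ⟨hb0, hbc⟩
      have hab : a * b ∈ 𝒜 (0:G) := by
        have := SetLike.mul_mem_graded (A := 𝒜) ha0 hb0
        rwa [add_zero] at this
      refine ⟨hab, fun x hx => ?_⟩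
      rw [mul_assoc, hbc x hx, ← mul_assoc, hac x hx, mul_assoc]
  obtain ⟨hr0mem, hrc⟩ := hr
  -- main computation for homogeneous elements
  have key : ∀ g : G, ∀ s ∈ 𝒜 g, r * s = s * r := by
    intro g s hs
    have hεs : ε g * s = s := (hunit g s hs).1
    have hsε : s * ε (-g) = s := (hunit g s hs).2
    have hε0' : ε (-g) ∈ 𝒜 (0:G) := hε0 (-g)
    have hrε0 : r * ε (-g) ∈ 𝒜 (0:G) := by
      have := SetLike.mul_mem_graded (A := 𝒜) hr0mem hε0'
      rwa [add_zero] at this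
    calc r * s = (r * ε g) * s := by rw [mul_assoc, hεs]
      _ = (∑ i, u g i * (r * ε (-g)) * v g i) * s := by rw [hinv g]
      _ = ∑ i, u g i * (r * ε (-g)) * v g i * s := by rw [Finset.sum_mul]
      _ = ∑ i, u g i * v g i * s * (r * ε (-g)) := by
          refine Finset.sum_congr rfl fun i _ => ?_
          have hvs : v g i * s ∈ 𝒜 (0:G) := by
            have := SetLike.mul_mem_graded (A := 𝒜) (hv g i) hs
            rwa [neg_add_cancel] at this
          calc u g i * (r * ε (-g)) * v g i * s
              = u g i * ((r * ε (-g)) * (v g i * s)) := by simp only [mul_assoc]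
            _ = u g i * ((v g i * s) * (r * ε (-g))) := by
                rw [show (r * ε (-g)) * (v g i * s) = (v g i * s) * (r * ε (-g)) from ?_]
                have h1 := hrc _ hvs
                have h2 := hεcomm (-g) _ hvs
                calc r * ε (-g) * (v g i * s) = r * (ε (-g) * (v g i * s)) := by simp only [mul_assoc]
                  _ = r * ((v g i * s) * ε (-g)) := by rw [h2]
                  _ = (r * (v g i * s)) * ε (-g) := by simp only [mul_assoc]
                  _ = ((v g i * s) * r) * ε (-g) := by rw [h1]
                  _ = (v g i * s) * (r * ε (-g)) := by simp only [mul_assoc]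
            _ = u g i * v g i * s * (r * ε (-g)) := by simp only [mul_assoc]
      _ = (∑ i, u g i * v g i) * s * (r * ε (-g)) := by rw [Finset.sum_mul, Finset.sum_mul]
      _ = ε g * s * (r * ε (-g)) := by rw [hsum g]
      _ = s * (r * ε (-g)) := by rw [hεs]
      _ = s * (ε (-g) * r) := by rw [hrc _ hε0']
      _ = (s * ε (-g)) * r := by rw [mul_assoc]
      _ = s * r := by rw [hsε]
  -- conclude by decomposition
  intro x
  refine DirectSum.Decomposition.inductionOn 𝒜 (motive := fun x => r * x = x * r) ?_ ?_ ?_ x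
  · simp
  · intro g m; exact key g m m.2
  · intro m m' hm hm'
    rw [mul_add, add_mul, hm, hm']
end Defs
end

section
/- Let S be a unital epsilon-strongly G-graded ring and r a minimal nonzero element of the boolean semigroup generated by {ε_g : g ∈ G}. If r is central in S, then N(r) := {g ∈ G : r ε_g = r} is a subgroup of G. -/
open Pointwise

section Defs

variable {G : Type} [AddGroup G] [DecidableEq G]
variable {A : Type} [Ring A]
variable {M : Type} [AddCommGroup M] [Module A M]

variable (𝒜 : G → AddSubgroup A)

section AuxEps

variable {G : Type} [AddGroup G] [DecidableEq G] {A : Type} [Ring A]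
variable (𝒜 : G → AddSubgroup A) [GradedRing 𝒜]

private lemma mul_ind {g h : G} {x : A} (hx : x ∈ (𝒜 g * 𝒜 h : AddSubgroup A))
    {p : A → Prop} (hp : ∀ a ∈ 𝒜 g, ∀ b ∈ 𝒜 h, p (a * b))
    (hadd : ∀ x y, p x → p y → p (x + y)) : p x :=
  AddSubmonoid.mul_induction_on hx hp hadd

private lemma grade_of_mul {g h : G} {x : A} (hx : x ∈ (𝒜 g * 𝒜 h : AddSubgroup A)) :
    x ∈ 𝒜 (g + h) :=
  mul_ind 𝒜 hx (fun a ha b hb => SetLike.mul_mem_graded ha hb)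
    (fun x y hx hy => add_mem hx hy)

variable (ε : G → A)
variable (hmem : ∀ g : G, ε g ∈ 𝒜 g * 𝒜 (-g))
variable (hunit : ∀ g : G, ∀ s ∈ 𝒜 g, ε g * s = s ∧ s * ε (-g) = s)

include hmem in
private lemma eps_mem_zero (g : G) : ε g ∈ 𝒜 0 := by
  have := grade_of_mul 𝒜 (hmem g)
  rwa [add_neg_cancel] at this

include hunit in
private lemma eps_unit (g : G) {x : A} (hx : x ∈ (𝒜 g * 𝒜 (-g) : AddSubgroup A)) :
    ε g * x = x ∧ x * ε g = x := by
  refine mul_ind 𝒜 hx (p := fun x => ε g * x = x ∧ x * ε g = x)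
    (fun a ha b hb => ?_) (fun x y hx hy => ?_)
  · constructor
    · rw [← mul_assoc, (hunit g a ha).1]
    · have hb' := (hunit (-g) b hb).2
      rw [neg_neg] at hb'
      rw [mul_assoc, hb']
  · exact ⟨by rw [mul_add, hx.1, hy.1], by rw [add_mul, hx.2, hy.2]⟩

private lemma ideal_mem (g : G) {s x : A} (hs : s ∈ 𝒜 0)
    (hx : x ∈ (𝒜 g * 𝒜 (-g) : AddSubgroup A)) :
    s * x ∈ (𝒜 g * 𝒜 (-g) : AddSubgroup A) ∧ x * s ∈ (𝒜 g * 𝒜 (-g) : AddSubgroup A) := by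
  refine mul_ind 𝒜 hx
    (p := fun x => s * x ∈ (𝒜 g * 𝒜 (-g) : AddSubgroup A) ∧ x * s ∈ (𝒜 g * 𝒜 (-g) : AddSubgroup A))
    (fun a ha b hb => ?_) (fun x y hx hy => ?_)
  · constructor
    · rw [← mul_assoc]
      have h1 : s * a ∈ 𝒜 g := by
        have := SetLike.mul_mem_graded hs ha; rwa [zero_add] at this
      exact AddSubmonoid.mul_mem_mul h1 hb
    · rw [mul_assoc]
      have h2 : b * s ∈ 𝒜 (-g) := by
        have := SetLike.mul_mem_graded hb hs; rwa [add_zero] at this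
      exact AddSubmonoid.mul_mem_mul ha h2
  · exact ⟨by rw [mul_add]; exact add_mem hx.1 hy.1,
      by rw [add_mul]; exact add_mem hx.2 hy.2⟩

include hmem hunit in
private lemma eps_central (g : G) {s : A} (hs : s ∈ 𝒜 0) :
    ε g * s = s * ε g := by
  have h1 : ε g * s ∈ (𝒜 g * 𝒜 (-g) : AddSubgroup A) := (ideal_mem 𝒜 g hs (hmem g)).2
  have h2 : s * ε g ∈ (𝒜 g * 𝒜 (-g) : AddSubgroup A) := (ideal_mem 𝒜 g hs (hmem g)).1
  calc ε g * s = (ε g * s) * ε g := ((eps_unit 𝒜 ε hunit g h1).2).symm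
    _ = ε g * (s * ε g) := by rw [mul_assoc]
    _ = s * ε g := (eps_unit 𝒜 ε hunit g h2).1

include hmem in
private lemma closure_mem_zero {a : A} (ha : a ∈ Subsemigroup.closure (Set.range ε)) :
    a ∈ 𝒜 0 := by
  refine Subsemigroup.closure_induction (fun x hx => ?_) (fun x y _ _ hx hy => ?_) ha
  · obtain ⟨g, rfl⟩ := hx; exact eps_mem_zero 𝒜 ε hmem g
  · have := SetLike.mul_mem_graded hx hy; rwa [zero_add] at this

include hmem hunit in
private lemma closure_comm_eps {a : A} (ha : a ∈ Subsemigroup.closure (Set.range ε))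
    (g : G) : ε g * a = a * ε g :=
  eps_central 𝒜 ε hmem hunit g (closure_mem_zero 𝒜 ε hmem ha)

include hmem hunit in
private lemma closure_comm {a b : A} (ha : a ∈ Subsemigroup.closure (Set.range ε))
    (hb : b ∈ Subsemigroup.closure (Set.range ε)) : a * b = b * a := by
  refine Subsemigroup.closure_induction (fun x hx => ?_) (fun x y hx hy px py => ?_) ha
  · obtain ⟨g, rfl⟩ := hx; exact closure_comm_eps 𝒜 ε hmem hunit hb g
  · rw [mul_assoc, py, ← mul_assoc, px, mul_assoc]

include hmem hunit in
private lemma closure_idem {a : A} (ha : a ∈ Subsemigroup.closure (Set.range ε)) :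
    a * a = a := by
  refine Subsemigroup.closure_induction (fun x hx => ?_) (fun x y hx hy px py => ?_) ha
  · obtain ⟨g, rfl⟩ := hx
    exact (eps_unit 𝒜 ε hunit g (hmem g)).1
  · have hcomm : y * x = x * y := closure_comm 𝒜 ε hmem hunit hy hx
    calc x * y * (x * y) = x * (y * x) * y := by rw [mul_assoc, mul_assoc, mul_assoc]
      _ = x * (x * y) * y := by rw [hcomm]
      _ = (x * x) * (y * y) := by rw [mul_assoc, mul_assoc, mul_assoc]
      _ = x * y := by rw [px, py]

end AuxEps

/-- If `r` is a minimal nonzero element of the boolean semigroup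
generated by the `ε_g`'s which is central in `S`, then `N(r) = {g : r ε_g = r}` is
a subgroup of `G`. -/
theorem N_is_subgroup_of_central
    {G : Type} [AddGroup G] [DecidableEq G]
    {A : Type} [Ring A] (𝒜 : G → AddSubgroup A) [GradedRing 𝒜]
    (ε : G → A)
    (hmem : ∀ g : G, ε g ∈ 𝒜 g * 𝒜 (-g))
    (hunit : ∀ g : G, ∀ s ∈ 𝒜 g, ε g * s = s ∧ s * ε (-g) = s)
    (r : A)
    (hrB : r ∈ Subsemigroup.closure (Set.range ε))
    (hr0 : r ≠ 0)
    (hmin : ∀ a ∈ Subsemigroup.closure (Set.range ε), a ≠ 0 → a * r = a → a = r)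
    (hrZ : ∀ x : A, r * x = x * r) :
    ∃ H : AddSubgroup G, ∀ g : G, g ∈ H ↔ r * ε g = r := by
  have epsB : ∀ g, ε g ∈ Subsemigroup.closure (Set.range ε) :=
    fun g => Subsemigroup.subset_closure ⟨g, rfl⟩
  have ridem : r * r = r := closure_idem 𝒜 ε hmem hunit hrB
  have key : ∀ g : G, r * ε g ≠ 0 → r * ε g = r := by
    intro g hne
    exact hmin (r * ε g) (Subsemigroup.mul_mem _ hrB (epsB g)) hne
      (by rw [mul_assoc, ← hrZ (ε g), ← mul_assoc, ridem])
  have hzero : r * ε 0 = r := by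
    have hr0m : r ∈ 𝒜 0 := closure_mem_zero 𝒜 ε hmem hrB
    have := (hunit 0 r hr0m).2
    rwa [neg_zero] at this
  have hneg : ∀ g, r * ε g = r → r * ε (-g) = r := by
    intro g hg
    apply key
    intro h0
    have hann : ∀ x ∈ 𝒜 (-g), r * x = 0 := by
      intro x hx
      rw [← (hunit (-g) x hx).1, ← mul_assoc, h0, zero_mul]
    have h2 : r * ε g = 0 := by
      refine mul_ind 𝒜 (hmem g) (p := fun x => r * x = 0) (fun a ha b hb => ?_)
        (fun x y hx hy => by show r * (x + y) = 0; rw [mul_add]; rw [hx, hy, add_zero])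
      show r * (a * b) = 0
      rw [← mul_assoc, hrZ a, mul_assoc, hann b hb, mul_zero]
    rw [hg] at h2
    exact absurd h2 hr0
  have hadd : ∀ g h, r * ε g = r → r * ε h = r → r * ε (g + h) = r := by
    intro g h hg hh
    apply key
    intro h0
    have hann : ∀ z ∈ 𝒜 (g + h), r * z = 0 := by
      intro z hz
      rw [← (hunit (g + h) z hz).1, ← mul_assoc, h0, zero_mul]
    have step2 : ∀ a ∈ 𝒜 g, ∀ y ∈ (𝒜 h * 𝒜 (-h) : AddSubgroup A), r * a * (r * y) = 0 := by
      intro a ha y hy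
      refine mul_ind 𝒜 hy (p := fun y => r * a * (r * y) = 0) (fun c hc d hd => ?_)
        (fun x y hx hy => by show r * a * (r * (x + y)) = 0; rw [mul_add, mul_add, hx, hy, add_zero])
      have h1 : r * (c * d) = c * (r * d) := by rw [← mul_assoc, hrZ c, mul_assoc]
      show r * a * (r * (c * d)) = 0
      rw [h1, ← mul_assoc, mul_assoc r a c, hann _ (SetLike.mul_mem_graded ha hc), zero_mul]
    have step3 : ∀ a ∈ 𝒜 g, r * a * r = 0 := by
      intro a ha
      have := step2 a ha (ε h) (hmem h)
      rwa [hh] at this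
    have step4 : ∀ x ∈ (𝒜 g * 𝒜 (-g) : AddSubgroup A), r * x * r = 0 := by
      intro x hx
      refine mul_ind 𝒜 hx (p := fun x => r * x * r = 0) (fun a ha b hb => ?_)
        (fun x y hx hy => by show r * (x + y) * r = 0; rw [mul_add, add_mul, hx, hy, add_zero])
      show r * (a * b) * r = 0
      calc r * (a * b) * r = r * a * r * b := by
            rw [← mul_assoc r a b, mul_assoc (r * a) b r, ← hrZ b, ← mul_assoc]
        _ = 0 := by rw [step3 a ha, zero_mul]
    have h2 : r * r = 0 := by
      have := step4 (ε g) (hmem g)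
      rwa [hg] at this
    rw [ridem] at h2
    exact absurd h2 hr0
  exact ⟨{ carrier := {g | r * ε g = r},
           zero_mem' := hzero,
           add_mem' := fun {g h} hg hh => hadd g h hg hh,
           neg_mem' := fun {g} hg => hneg g hg }, fun g => Iff.rfl⟩
end Defs
end

section
/- Let S be a unital epsilon-strongly G-graded ring and e ∈ B(E_G)* an epsilon-central element (a minimal element of the boolean semigroup of the ε_g's which is central in S). Then for all g, h ∈ N(e), (e S_g)(e S_h) = e S_{gh}; in particular, eS = ⊕_{g∈N(e)} e S_g is a strongly N(e)-graded ring with identity e. -/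
open Pointwise

section Defs

variable {G : Type} [AddGroup G] [DecidableEq G]
variable {A : Type} [Ring A]
variable {M : Type} [AddCommGroup M] [Module A M]

variable (𝒜 : G → AddSubgroup A)

section EpsilonCentral

variable {G : Type} [AddGroup G] [DecidableEq G]
variable {A : Type} [Ring A]

/-- `r` is an epsilon-central element for the family `ε`: a minimal nonzero element of
the boolean semigroup generated by `{ε_g : g ∈ G}` that is central in `S`. -/
def IsEpsilonCentral (ε : G → A) (r : A) : Prop :=
  r ∈ Subsemigroup.closure (Set.range ε) ∧ r ≠ 0 ∧
    (∀ a ∈ Subsemigroup.closure (Set.range ε), a ≠ 0 → a * r = a → a = r) ∧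
    ∀ x : A, r * x = x * r

/-- The image `e S_g` of a homogeneous component under left multiplication by `e`. -/
def cornerComponent (e : A) (S : AddSubgroup A) : AddSubgroup A :=
  S.map (AddMonoidHom.mulLeft e)

end EpsilonCentral

section MyAux
set_option linter.unusedSectionVars false
set_option linter.unusedVariables false
variable {G : Type} [AddGroup G] [DecidableEq G] {A : Type} [Ring A]

variable {G : Type} [AddGroup G] [DecidableEq G] {A : Type} [Ring A]

theorem my_eps_unit (𝒜 : G → AddSubgroup A) (ε : G → A)
    (hunit : ∀ g : G, ∀ s ∈ 𝒜 g, ε g * s = s ∧ s * ε (-g) = s)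
    (g : G) : ∀ z ∈ 𝒜 g * 𝒜 (-g), ε g * z = z ∧ z * ε g = z := by
  intro z hz
  refine AddSubmonoid.mul_induction_on hz (fun x hx y hy => ?_) (fun a b ha hb => ?_)
  · refine ⟨by rw [← mul_assoc, (hunit g x hx).1], ?_⟩
    have h2 := (hunit (-g) y hy).2
    rw [neg_neg] at h2
    rw [mul_assoc, h2]
  · exact ⟨by rw [mul_add, ha.1, hb.1], by rw [add_mul, ha.2, hb.2]⟩

theorem my_eps_mem_zero (𝒜 : G → AddSubgroup A) [GradedRing 𝒜] (ε : G → A)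
    (hmem : ∀ g : G, ε g ∈ 𝒜 g * 𝒜 (-g)) (g : G) : ε g ∈ 𝒜 0 := by
  refine AddSubmonoid.mul_induction_on (hmem g) (fun x hx y hy => ?_)
    (fun a b ha hb => (𝒜 0).add_mem ha hb)
  have hx' : x ∈ 𝒜 g := hx
  have hy' : y ∈ 𝒜 (-g) := hy
  have := SetLike.mul_mem_graded hx' hy'
  rwa [add_neg_cancel] at this

theorem my_stable (𝒜 : G → AddSubgroup A) [GradedRing 𝒜] {w : A} (hw : w ∈ 𝒜 0) (h : G) :
    ∀ z ∈ 𝒜 h * 𝒜 (-h), w * z ∈ 𝒜 h * 𝒜 (-h) ∧ z * w ∈ 𝒜 h * 𝒜 (-h) := by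
  intro z hz
  refine AddSubmonoid.mul_induction_on hz (fun x hx y hy => ?_) (fun a b ha hb => ?_)
  · constructor
    · rw [← mul_assoc]
      have : w * x ∈ 𝒜 (0 + h) := SetLike.mul_mem_graded hw hx
      rw [zero_add] at this
      exact AddSubmonoid.mul_mem_mul this hy
    · rw [mul_assoc]
      have : y * w ∈ 𝒜 (-h + 0) := SetLike.mul_mem_graded hy hw
      rw [add_zero] at this
      exact AddSubmonoid.mul_mem_mul hx this
  · exact ⟨by rw [mul_add]; exact (𝒜 h * 𝒜 (-h)).add_mem ha.1 hb.1,
      by rw [add_mul]; exact (𝒜 h * 𝒜 (-h)).add_mem ha.2 hb.2⟩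

theorem my_eps_comm (𝒜 : G → AddSubgroup A) [GradedRing 𝒜] (ε : G → A)
    (hmem : ∀ g : G, ε g ∈ 𝒜 g * 𝒜 (-g))
    (hunit : ∀ g : G, ∀ s ∈ 𝒜 g, ε g * s = s ∧ s * ε (-g) = s)
    (g h : G) : ε g * ε h = ε h * ε g := by
  have hg0 := my_eps_mem_zero 𝒜 ε hmem g
  have h1 : ε g * ε h ∈ 𝒜 h * 𝒜 (-h) := (my_stable 𝒜 hg0 h (ε h) (hmem h)).1
  have h2 : ε h * ε g ∈ 𝒜 h * 𝒜 (-h) := (my_stable 𝒜 hg0 h (ε h) (hmem h)).2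
  calc ε g * ε h = ε h * (ε g * ε h) := (my_eps_unit 𝒜 ε hunit h _ h1).1.symm
    _ = (ε h * ε g) * ε h := by rw [mul_assoc]
    _ = ε h * ε g := (my_eps_unit 𝒜 ε hunit h _ h2).2

theorem my_closure_comm_eps (𝒜 : G → AddSubgroup A) [GradedRing 𝒜] (ε : G → A)
    (hmem : ∀ g : G, ε g ∈ 𝒜 g * 𝒜 (-g))
    (hunit : ∀ g : G, ∀ s ∈ 𝒜 g, ε g * s = s ∧ s * ε (-g) = s) :
    ∀ a ∈ Subsemigroup.closure (Set.range ε), ∀ k : G, a * ε k = ε k * a := by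
  intro a ha
  refine Subsemigroup.closure_induction (fun x hx k => ?_) (fun x y _ _ hx hy k => ?_) ha
  · obtain ⟨g, rfl⟩ := hx
    exact my_eps_comm 𝒜 ε hmem hunit g k
  · rw [mul_assoc, hy, ← mul_assoc, hx, mul_assoc]

theorem my_closure_comm (𝒜 : G → AddSubgroup A) [GradedRing 𝒜] (ε : G → A)
    (hmem : ∀ g : G, ε g ∈ 𝒜 g * 𝒜 (-g))
    (hunit : ∀ g : G, ∀ s ∈ 𝒜 g, ε g * s = s ∧ s * ε (-g) = s) :
    ∀ a ∈ Subsemigroup.closure (Set.range ε),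
      ∀ b ∈ Subsemigroup.closure (Set.range ε), a * b = b * a := by
  intro a ha b hb
  induction hb using Subsemigroup.closure_induction with
  | mem x hx =>
    obtain ⟨k, rfl⟩ := hx
    exact my_closure_comm_eps 𝒜 ε hmem hunit a ha k
  | mul x y _ _ hx hy => rw [← mul_assoc, hx, mul_assoc, hy, ← mul_assoc]

theorem my_closure_idem (𝒜 : G → AddSubgroup A) [GradedRing 𝒜] (ε : G → A)
    (hmem : ∀ g : G, ε g ∈ 𝒜 g * 𝒜 (-g))
    (hunit : ∀ g : G, ∀ s ∈ 𝒜 g, ε g * s = s ∧ s * ε (-g) = s) :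
    ∀ a ∈ Subsemigroup.closure (Set.range ε), a * a = a := by
  intro a ha
  induction ha using Subsemigroup.closure_induction with
  | mem x hx =>
    obtain ⟨k, rfl⟩ := hx
    exact (my_eps_unit 𝒜 ε hunit k (ε k) (hmem k)).1
  | mul x y hx' hy' hx hy =>
    have hcomm := my_closure_comm 𝒜 ε hmem hunit x hx' y hy'
    calc x * y * (x * y) = x * (y * x) * y := by simp only [mul_assoc]
      _ = x * (x * y) * y := by rw [hcomm]
      _ = (x * x) * (y * y) := by simp only [mul_assoc]
      _ = x * y := by rw [hx, hy]
end MyAux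

/-- If `e` is an epsilon-central element, then for all
`g, h ∈ N(e)` one has `(e S_g)(e S_h) = e S_{gh}`; i.e. `eS = ⊕_{g ∈ N(e)} e S_g`
is strongly `N(e)`-graded with identity `e`. -/
theorem corner_strongly_graded_of_epsilonCentral
    {G : Type} [AddGroup G] [DecidableEq G]
    {A : Type} [Ring A] (𝒜 : G → AddSubgroup A) [GradedRing 𝒜]
    (ε : G → A)
    (hmem : ∀ g : G, ε g ∈ 𝒜 g * 𝒜 (-g))
    (hunit : ∀ g : G, ∀ s ∈ 𝒜 g, ε g * s = s ∧ s * ε (-g) = s)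
    (e : A) (he : IsEpsilonCentral ε e)
    (g h : G) (hg : e * ε g = e) (hh : e * ε h = e) :
    cornerComponent e (𝒜 g) * cornerComponent e (𝒜 h)
      = cornerComponent e (𝒜 (g + h)) := by
  obtain ⟨hecl, -, -, hcen⟩ := he
  have hee : e * e = e := my_closure_idem 𝒜 ε hmem hunit e hecl
  apply le_antisymm
  · intro z hz
    refine AddSubmonoid.mul_induction_on hz (fun x hx y hy => ?_)
      (fun a b ha hb => (cornerComponent e (𝒜 (g + h))).add_mem ha hb)
    obtain ⟨a, ha, rfl⟩ := hx
    obtain ⟨b, hb, rfl⟩ := hy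
    refine AddSubgroup.mem_map.mpr ⟨a * b, SetLike.mul_mem_graded ha hb, ?_⟩
    show e * (a * b) = e * a * (e * b)
    calc e * (a * b) = (e * e) * (a * b) := by rw [hee]
      _ = e * ((e * a) * b) := by simp only [mul_assoc]
      _ = e * ((a * e) * b) := by rw [hcen a]
      _ = e * a * (e * b) := by simp only [mul_assoc]
  · intro z hz
    obtain ⟨c, hc, rfl⟩ := hz
    show e * c ∈ cornerComponent e (𝒜 g) * cornerComponent e (𝒜 h)
    have key : ∀ w ∈ 𝒜 g * 𝒜 (-g),
        e * w * c ∈ cornerComponent e (𝒜 g) * cornerComponent e (𝒜 h) := by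
      intro w hw
      refine AddSubmonoid.mul_induction_on hw (fun x hx y hy => ?_) (fun a b ha hb => ?_)
      · have hyc : y * c ∈ 𝒜 h := by
          have hy2 : y ∈ 𝒜 (-g) := hy
          have hc2 : c ∈ 𝒜 (g + h) := hc
          have := SetLike.mul_mem_graded hy2 hc2
          rwa [neg_add_cancel_left] at this
        have heq : e * (x * y) * c = (e * x) * (e * (y * c)) := by
          calc e * (x * y) * c = e * (x * (y * c)) := by simp only [mul_assoc]
            _ = (e * e) * (x * (y * c)) := by rw [hee]
            _ = e * ((e * x) * (y * c)) := by simp only [mul_assoc]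
            _ = e * ((x * e) * (y * c)) := by rw [hcen x]
            _ = (e * x) * (e * (y * c)) := by simp only [mul_assoc]
        rw [heq]
        exact AddSubmonoid.mul_mem_mul (AddSubgroup.mem_map.mpr ⟨x, hx, rfl⟩)
          (AddSubgroup.mem_map.mpr ⟨y * c, hyc, rfl⟩)
      · have : e * (a + b) * c = e * a * c + e * b * c := by rw [mul_add, add_mul]
        rw [this]
        exact (cornerComponent e (𝒜 g) * cornerComponent e (𝒜 h)).add_mem ha hb
    have := key (ε g) (hmem g)
    rwa [hg] at this
end Defs
end

section
/- Let S be a unital epsilon-strongly G-graded ring and r, s two distinct epsilon-central elements of B(E_G)*. Then rs = 0, and (rS)_N ⊕ (sS)_N is a strongly N-graded ring with identity r + s, where N = N(r) ∩ N(s). -/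
open Pointwise

section Defs

variable {G : Type} [AddGroup G] [DecidableEq G]
variable {A : Type} [Ring A]
variable {M : Type} [AddCommGroup M] [Module A M]

variable (𝒜 : G → AddSubgroup A)

/-- If `r ≠ s` are epsilon-central elements, then `r s = 0` and
`(rS)_N ⊕ (sS)_N = ⊕_{g ∈ N} (r + s) S_g` is strongly `N`-graded with identity
`r + s`, where `N = N(r) ∩ N(s)`. -/
theorem orthogonal_and_sum_strongly_graded_of_epsilonCentral
    {G : Type} [AddGroup G] [DecidableEq G]
    {A : Type} [Ring A] (𝒜 : G → AddSubgroup A) [GradedRing 𝒜]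
    (ε : G → A)
    (hmem : ∀ g : G, ε g ∈ 𝒜 g * 𝒜 (-g))
    (hunit : ∀ g : G, ∀ s ∈ 𝒜 g, ε g * s = s ∧ s * ε (-g) = s)
    (r s : A) (hr : IsEpsilonCentral ε r) (hs : IsEpsilonCentral ε s) (hrs : r ≠ s) :
    r * s = 0 ∧
      ∀ g h : G, r * ε g = r → s * ε g = s → r * ε h = r → s * ε h = s →
        cornerComponent (r + s) (𝒜 g) * cornerComponent (r + s) (𝒜 h)
          = cornerComponent (r + s) (𝒜 (g + h)) := by
  classical
  obtain ⟨hrc, hr0, hrmin, hrcen⟩ := hr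
  obtain ⟨hsc, hs0, hsmin, hscen⟩ := hs
  have hgmul : ∀ {g h : G} {a b : A}, a ∈ 𝒜 g → b ∈ 𝒜 h → a * b ∈ 𝒜 (g + h) :=
    fun ha hb => SetLike.mul_mem_graded ha hb
  have hmulmem : ∀ (g : G) {x : A}, x ∈ 𝒜 g * 𝒜 (-g) → x ∈ 𝒜 (0 : G) := by
    intro g x hx
    refine AddSubmonoid.mul_induction_on hx (fun u hu v hv => ?_)
      (fun a b ha hb => (𝒜 0).add_mem ha hb)
    simpa [add_neg_cancel] using hgmul hu hv
  have hε0 : ∀ g, ε g ∈ 𝒜 (0 : G) := fun g => hmulmem g (hmem g)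
  have hlunit : ∀ (g : G) {x : A}, x ∈ 𝒜 g * 𝒜 (-g) → ε g * x = x := by
    intro g x hx
    refine AddSubmonoid.mul_induction_on hx (fun u hu v hv => ?_)
      (fun a b ha hb => by rw [mul_add, ha, hb])
    rw [← mul_assoc, (hunit g u hu).1]
  have hεidem : ∀ g, ε g * ε g = ε g := fun g => hlunit g (hmem g)
  have hεcomm : ∀ (g : G) {a : A}, a ∈ 𝒜 (0 : G) → a * ε g = ε g * a := by
    intro g a ha
    have h1 : ε g * a * ε g = ε g * a := by
      have key : ∀ x ∈ 𝒜 g * 𝒜 (-g), x * a * ε g = x * a := by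
        intro x hx
        refine AddSubmonoid.mul_induction_on hx (fun u hu v hv => ?_)
          (fun b c hb hc => by rw [add_mul, add_mul, hb, hc])
        have hva : v * a ∈ 𝒜 (-g) := by simpa [add_zero] using hgmul hv ha
        have h2 := (hunit (-g) (v * a) hva).2
        rw [neg_neg] at h2
        rw [mul_assoc u v a, mul_assoc, h2]
      exact key _ (hmem g)
    have h2 : ε g * (a * ε g) = a * ε g := by
      have key : ∀ x ∈ 𝒜 g * 𝒜 (-g), ε g * (a * x) = a * x := by
        intro x hx
        refine AddSubmonoid.mul_induction_on hx (fun u hu v hv => ?_)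
          (fun b c hb hc => by rw [mul_add, mul_add, hb, hc])
        have hau : a * u ∈ 𝒜 g := by simpa [zero_add] using hgmul ha hu
        rw [← mul_assoc a u v, ← mul_assoc, (hunit g _ hau).1]
      exact key _ (hmem g)
    calc a * ε g = ε g * (a * ε g) := h2.symm
      _ = ε g * a := by rw [← mul_assoc, h1]
  -- closure facts
  have hCmem : ∀ {a : A}, a ∈ Subsemigroup.closure (Set.range ε) → a ∈ 𝒜 (0 : G) := by
    intro a ha
    induction ha using Subsemigroup.closure_induction with
    | mem x hx => obtain ⟨g, rfl⟩ := hx; exact hε0 g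
    | mul x y hx hy px py => simpa [zero_add] using hgmul px py
  have hCε : ∀ {a : A}, a ∈ Subsemigroup.closure (Set.range ε) → ∀ g, a * ε g = ε g * a :=
    fun ha g => hεcomm g (hCmem ha)
  have hCcomm : ∀ {a b : A}, a ∈ Subsemigroup.closure (Set.range ε) →
      b ∈ Subsemigroup.closure (Set.range ε) → a * b = b * a := by
    intro a b ha hb
    induction hb using Subsemigroup.closure_induction with
    | mem x hx => obtain ⟨g, rfl⟩ := hx; exact hCε ha g
    | mul x y hx hy px py => rw [← mul_assoc, px, mul_assoc, py, ← mul_assoc]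
  have hCidem : ∀ {a : A}, a ∈ Subsemigroup.closure (Set.range ε) → a * a = a := by
    intro a ha
    induction ha using Subsemigroup.closure_induction with
    | mem x hx => obtain ⟨g, rfl⟩ := hx; exact hεidem g
    | mul x y hx hy px py =>
      calc x * y * (x * y) = x * (y * x) * y := by rw [mul_assoc, ← mul_assoc y x y, ← mul_assoc]
        _ = x * (x * y) * y := by rw [hCcomm hy hx]
        _ = (x * x) * (y * y) := by rw [← mul_assoc, mul_assoc (x*x)]
        _ = x * y := by rw [px, py]
  have hrr : r * r = r := hCidem hrc
  have hss : s * s = s := hCidem hsc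
  have hrs0 : r * s = 0 := by
    by_contra hne
    have hmemrs : r * s ∈ Subsemigroup.closure (Set.range ε) := mul_mem hrc hsc
    have h1 : r * s = r := hrmin _ hmemrs hne (by rw [mul_assoc, hscen r, ← mul_assoc, hrr])
    have h2 : r * s = s := hsmin _ hmemrs hne (by rw [mul_assoc, hss])
    exact hrs (h1.symm.trans h2)
  refine ⟨hrs0, ?_⟩
  intro g h hrg hsg hrh hsh
  set e := r + s with he
  have hsr0 : s * r = 0 := by rw [hscen r, hrs0]
  have he2 : e * e = e := by
    rw [he, add_mul, mul_add, mul_add, hrr, hrs0, hsr0, hss, add_zero, zero_add]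
  have hecen : ∀ x : A, e * x = x * e := fun x => by rw [he, add_mul, mul_add, hrcen, hscen]
  have heg : e * ε g = e := by rw [he, add_mul, hrg, hsg]
  have hkey : ∀ a b : A, (e * a) * (e * b) = e * (a * b) := by
    intro a b
    calc (e * a) * (e * b) = e * ((a * e) * b) := by rw [mul_assoc, ← mul_assoc a e b]
      _ = e * ((e * a) * b) := by rw [← hecen a]
      _ = e * (e * (a * b)) := by rw [mul_assoc e a b]
      _ = e * (a * b) := by rw [← mul_assoc, he2]
  refine le_antisymm ?_ ?_
  · intro x hx
    refine AddSubmonoid.mul_induction_on hx (fun u hu v hv => ?_)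
      (fun a b ha hb => (cornerComponent e (𝒜 (g + h))).add_mem ha hb)
    obtain ⟨a, ha, rfl⟩ := AddSubgroup.mem_map.mp hu
    obtain ⟨b, hb, rfl⟩ := AddSubgroup.mem_map.mp hv
    exact AddSubgroup.mem_map.mpr ⟨a * b, hgmul ha hb, (hkey a b).symm⟩
  · intro x hx
    obtain ⟨c, hc, rfl⟩ := AddSubgroup.mem_map.mp hx
    have hclaim : ∀ x ∈ 𝒜 g * 𝒜 (-g),
        e * x * c ∈ cornerComponent e (𝒜 g) * cornerComponent e (𝒜 h) := by
      intro x hx'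
      refine AddSubmonoid.mul_induction_on hx' (fun u hu v hv => ?_) (fun a b ha hb => ?_)
      · have hvc : v * c ∈ 𝒜 h := by
          have := hgmul hv hc
          rwa [neg_add_cancel_left] at this
        have heq : e * (u * v) * c = (e * u) * (e * (v * c)) := by
          rw [hkey, ← mul_assoc u v c, mul_assoc]
        rw [heq]
        exact AddSubmonoid.mul_mem_mul (AddSubgroup.mem_map.mpr ⟨u, hu, rfl⟩)
          (AddSubgroup.mem_map.mpr ⟨v * c, hvc, rfl⟩)
      · have heq : e * (a + b) * c = e * a * c + e * b * c := by rw [mul_add, add_mul]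
        rw [heq]
        exact (cornerComponent e (𝒜 g) * cornerComponent e (𝒜 h)).add_mem ha hb
    have : (AddMonoidHom.mulLeft e) c = e * ε g * c := by rw [heg]; rfl
    rw [this]
    exact hclaim _ (hmem g)
end Defs
end

section
/- Let S be a unital epsilon-strongly G-graded ring which is an epsilon-crossed product, and let e be an epsilon-central element of B(E_G)*. Then the strongly graded ring (eS)_{N(e)} = ⊕_{g∈N(e)} e S_g is a crossed product, i.e., each e S_g contains a unit of eS. -/
open Pointwise

section Defs

variable {G : Type} [AddGroup G] [DecidableEq G]
variable {A : Type} [Ring A]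
variable {M : Type} [AddCommGroup M] [Module A M]

variable (𝒜 : G → AddSubgroup A)

section Aux

variable {G : Type} [AddGroup G] [DecidableEq G]
variable {A : Type} [Ring A]

lemma aux_mul_le_zero (𝒜 : G → AddSubgroup A) [GradedRing 𝒜] (g : G) :
    𝒜 g * 𝒜 (-g) ≤ 𝒜 0 := by
  intro x hx
  refine AddSubmonoid.mul_induction_on hx (fun s hs t ht => ?_)
    (fun a b ha hb => (𝒜 0).add_mem ha hb)
  have := SetLike.mul_mem_graded (A := 𝒜) hs ht
  rwa [add_neg_cancel] at this

lemma aux_left_id (𝒜 : G → AddSubgroup A) [GradedRing 𝒜] (ε : G → A)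
    (hunit : ∀ g : G, ∀ s ∈ 𝒜 g, ε g * s = s ∧ s * ε (-g) = s)
    (g : G) : ∀ x ∈ 𝒜 g * 𝒜 (-g), ε g * x = x ∧ x * ε g = x := by
  intro x hx
  refine AddSubmonoid.mul_induction_on hx (fun s hs t ht => ?_)
    (fun a b ha hb => ?_)
  · constructor
    · rw [← mul_assoc, (hunit g s hs).1]
    · rw [mul_assoc]
      have h := (hunit (-g) t ht).2
      rw [neg_neg] at h
      rw [h]
  · constructor
    · rw [mul_add, ha.1, hb.1]
    · rw [add_mul, ha.2, hb.2]

/-- Each `ε g` lies in `𝒜 0`, commutes with every element of `𝒜 0`,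
and is idempotent. -/
lemma aux_eps_central (𝒜 : G → AddSubgroup A) [GradedRing 𝒜] (ε : G → A)
    (hmem : ∀ g : G, ε g ∈ 𝒜 g * 𝒜 (-g))
    (hunit : ∀ g : G, ∀ s ∈ 𝒜 g, ε g * s = s ∧ s * ε (-g) = s)
    (g : G) :
    ε g ∈ 𝒜 0 ∧ (∀ x ∈ 𝒜 0, ε g * x = x * ε g) ∧ ε g * ε g = ε g := by
  have hid := aux_left_id 𝒜 ε hunit g
  refine ⟨aux_mul_le_zero 𝒜 g (hmem g), fun x hx => ?_, (hid _ (hmem g)).1⟩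
  -- ideal property
  have hL : ε g * x ∈ 𝒜 g * 𝒜 (-g) := by
    refine AddSubmonoid.mul_induction_on (hmem g) (fun s hs t ht => ?_)
      (fun a b ha hb => ?_)
    · rw [mul_assoc]
      have htx : t * x ∈ 𝒜 (-g) := by
        have := SetLike.mul_mem_graded (A := 𝒜) ht hx
        rwa [add_zero] at this
      exact AddSubmonoid.mul_mem_mul hs htx
    · rw [add_mul]; exact (𝒜 g * 𝒜 (-g)).add_mem ha hb
  have hR : x * ε g ∈ 𝒜 g * 𝒜 (-g) := by
    refine AddSubmonoid.mul_induction_on (hmem g) (fun s hs t ht => ?_)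
      (fun a b ha hb => ?_)
    · rw [← mul_assoc]
      have hxs : x * s ∈ 𝒜 g := by
        have := SetLike.mul_mem_graded (A := 𝒜) hx hs
        rwa [zero_add] at this
      exact AddSubmonoid.mul_mem_mul hxs ht
    · rw [mul_add]; exact (𝒜 g * 𝒜 (-g)).add_mem ha hb
  have h1 : ε g * x * ε g = ε g * x := (hid _ hL).2
  have h2 : ε g * (x * ε g) = x * ε g := (hid _ hR).1
  rw [← h1, mul_assoc, h2]

/-- Every element of the boolean semigroup generated by the `ε g` lies in `𝒜 0`,
commutes with every element of `𝒜 0`, and is idempotent. -/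
lemma aux_closure (𝒜 : G → AddSubgroup A) [GradedRing 𝒜] (ε : G → A)
    (hmem : ∀ g : G, ε g ∈ 𝒜 g * 𝒜 (-g))
    (hunit : ∀ g : G, ∀ s ∈ 𝒜 g, ε g * s = s ∧ s * ε (-g) = s)
    {a : A} (ha : a ∈ Subsemigroup.closure (Set.range ε)) :
    a ∈ 𝒜 0 ∧ (∀ x ∈ 𝒜 0, a * x = x * a) ∧ a * a = a := by
  induction ha using Subsemigroup.closure_induction with
  | mem x hx =>
    obtain ⟨g, rfl⟩ := hx
    exact aux_eps_central 𝒜 ε hmem hunit g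
  | mul x y hx hy ihx ihy =>
    obtain ⟨hx0, hxc, hxi⟩ := ihx
    obtain ⟨hy0, hyc, hyi⟩ := ihy
    have hxy0 : x * y ∈ 𝒜 0 := by
      have := SetLike.mul_mem_graded (A := 𝒜) hx0 hy0
      rwa [add_zero] at this
    refine ⟨hxy0, fun z hz => ?_, ?_⟩
    · rw [mul_assoc, hyc z hz, ← mul_assoc, hxc z hz, mul_assoc]
    · have : x * y * (x * y) = x * (y * x) * y := by noncomm_ring
      rw [this, ← hxc y hy0, ← mul_assoc, hxi, mul_assoc, hyi]

end Aux

/-- If `S` is an epsilon-crossed product and `e` is epsilon-central,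
then the strongly graded ring `(eS)_{N(e)}` is a crossed product: each `e S_g`
(`g ∈ N(e)`) contains a unit of the ring `eS` (with identity `e`). -/
theorem corner_crossed_product_of_epsilonCrossed
    {G : Type} [AddGroup G] [DecidableEq G]
    {A : Type} [Ring A] (𝒜 : G → AddSubgroup A) [GradedRing 𝒜]
    (ε : G → A)
    (hmem : ∀ g : G, ε g ∈ 𝒜 g * 𝒜 (-g))
    (hunit : ∀ g : G, ∀ s ∈ 𝒜 g, ε g * s = s ∧ s * ε (-g) = s)
    (hcross : ∀ g : G, ∃ s ∈ 𝒜 g, ∃ t ∈ 𝒜 (-g), s * t = ε g ∧ t * s = ε (-g))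
    (e : A) (he : IsEpsilonCentral ε e) :
    ∀ g : G, e * ε g = e →
      ∃ u v : A, u ∈ cornerComponent e (𝒜 g) ∧ (∃ t : A, v = e * t) ∧
        u * v = e ∧ v * u = e := by
  obtain ⟨hecl, hene, hmin, hcomm⟩ := he
  have hee : e * e = e := (aux_closure 𝒜 ε hmem hunit hecl).2.2
  intro g hg
  obtain ⟨s, hs, t, ht, hst, hts⟩ := hcross g
  have hεg_idem : ε g * ε g = ε g :=
    (aux_eps_central 𝒜 ε hmem hunit g).2.2
  -- e * ε (-g) ≠ 0
  have hne : e * ε (-g) ≠ 0 := by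
    intro h0
    apply hene
    have h3 : t * (e * s) = 0 := by
      rw [hcomm s, ← mul_assoc, hts, ← hcomm, h0]
    calc e = e * e := hee.symm
      _ = (e * ε g) * (e * ε g) := by rw [hg]
      _ = (ε g * e) * (e * ε g) := by rw [hcomm (ε g)]
      _ = ((s * t) * e) * (e * (s * t)) := by rw [hst]
      _ = s * (t * ((e * e) * s)) * t := by noncomm_ring
      _ = s * (t * (e * s)) * t := by rw [hee]
      _ = 0 := by rw [h3, mul_zero, zero_mul]
  -- e * ε (-g) = e by minimality
  have hmem' : e * ε (-g) ∈ Subsemigroup.closure (Set.range ε) :=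
    Subsemigroup.mul_mem _ hecl (Subsemigroup.subset_closure ⟨-g, rfl⟩)
  have hfix : (e * ε (-g)) * e = e * ε (-g) := by
    rw [mul_assoc, ← hcomm (ε (-g)), ← mul_assoc, hee]
  have hg' : e * ε (-g) = e := hmin _ hmem' hne hfix
  refine ⟨e * s, e * t, ⟨s, hs, rfl⟩, ⟨t, rfl⟩, ?_, ?_⟩
  · calc e * s * (e * t) = e * (s * e) * t := by noncomm_ring
      _ = e * (e * s) * t := by rw [← hcomm s]
      _ = e * e * (s * t) := by noncomm_ring
      _ = e := by rw [hee, hst, hg]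
  · calc e * t * (e * s) = e * (t * e) * s := by noncomm_ring
      _ = e * (e * t) * s := by rw [← hcomm t]
      _ = e * e * (t * s) := by noncomm_ring
      _ = e := by rw [hee, hts, hg']
end Defs
end

section
/- Let S be a unital epsilon-strongly G-graded ring such that ε_G := the product (meet) of all ε_g over g ∈ G is a nonzero element of the boolean semigroup B(E_G)*. Then ε_G S = ⊕_{g∈G} ε_G S_g is a strongly G-graded ring. -/
open Pointwise

section Defs

variable {G : Type} [AddGroup G] [DecidableEq G]
variable {A : Type} [Ring A]
variable {M : Type} [AddCommGroup M] [Module A M]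

variable (𝒜 : G → AddSubgroup A)

section Aux

open Pointwise

variable {G : Type} [AddGroup G] [DecidableEq G]
variable {A : Type} [Ring A]

lemma aux_mul_induction {M N : AddSubgroup A} {x : A} (hx : x ∈ M * N)
    {C : A → Prop} (hm : ∀ m ∈ M, ∀ n ∈ N, C (m * n))
    (ha : ∀ x y, C x → C y → C (x + y)) : C x :=
  AddSubmonoid.mul_induction_on hx hm ha

lemma aux_mul_mem {M N : AddSubgroup A} {m n : A} (hm : m ∈ M) (hn : n ∈ N) :
    m * n ∈ M * N := AddSubmonoid.mul_mem_mul hm hn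

variable (𝒜 : G → AddSubgroup A) [GradedRing 𝒜]

lemma lemA (ε : G → A)
    (hmem : ∀ g : G, ε g ∈ 𝒜 g * 𝒜 (-g))
    (hunit : ∀ g : G, ∀ s ∈ 𝒜 g, ε g * s = s ∧ s * ε (-g) = s)
    (g h : G) {s : A} (hs : s ∈ 𝒜 g) :
    s * ε h = ε (g + h) * s := by
  have step1 : ε (g + h) * (s * ε h) = s * ε h := by
    have H : ∀ x ∈ 𝒜 h * 𝒜 (-h), ε (g + h) * (s * x) = s * x := by
      intro x hx
      refine aux_mul_induction (C := fun y => ε (g + h) * (s * y) = s * y) hx (fun c hc d hd => ?_) (fun x y hx hy => ?_)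
      · show ε (g + h) * (s * (c * d)) = s * (c * d)
        have hsc : s * c ∈ 𝒜 (g + h) := SetLike.mul_mem_graded hs hc
        rw [← mul_assoc s c d, ← mul_assoc, (hunit _ _ hsc).1]
      · show ε (g + h) * (s * (x + y)) = s * (x + y)
        rw [mul_add, mul_add, hx, hy]
    exact H _ (hmem h)
  have step2 : (ε (g + h) * s) * ε h = ε (g + h) * s := by
    have H : ∀ x ∈ 𝒜 (g + h) * 𝒜 (-(g + h)), (x * s) * ε h = x * s := by
      intro x hx
      refine aux_mul_induction (C := fun y => (y * s) * ε h = y * s) hx (fun p hp q hq => ?_) (fun x y hx hy => ?_)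
      · show (p * q) * s * ε h = (p * q) * s
        have hqs : q * s ∈ 𝒜 (-h) := by
          have := SetLike.mul_mem_graded hq hs
          rwa [neg_add_rev, add_assoc, neg_add_cancel, add_zero] at this
        have h2 := (hunit (-h) _ hqs).2
        rw [neg_neg] at h2
        rw [mul_assoc p q s, mul_assoc, h2]
      · show (x + y) * s * ε h = (x + y) * s
        rw [add_mul, add_mul, hx, hy]
    exact H _ (hmem (g + h))
  calc s * ε h = ε (g + h) * s * ε h := by rw [mul_assoc, step1]
    _ = ε (g + h) * s := step2

lemma closure_sub_zero (ε : G → A) (hmem : ∀ g : G, ε g ∈ 𝒜 g * 𝒜 (-g)) :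
    ∀ x ∈ Subsemigroup.closure (Set.range ε), x ∈ 𝒜 0 := by
  intro x hx
  induction hx using Subsemigroup.closure_induction with
  | mem x hx =>
    obtain ⟨g, rfl⟩ := hx
    refine aux_mul_induction (hmem g) (fun m hm n hn => ?_) (fun x y hx hy => add_mem hx hy)
    have := SetLike.mul_mem_graded hm hn
    rwa [add_neg_cancel] at this
  | mul x y hx hy ihx ihy =>
    have := SetLike.mul_mem_graded ihx ihy
    rwa [add_zero] at this

lemma comm_zero (ε : G → A)
    (hmem : ∀ g : G, ε g ∈ 𝒜 g * 𝒜 (-g))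
    (hunit : ∀ g : G, ∀ s ∈ 𝒜 g, ε g * s = s ∧ s * ε (-g) = s) :
    ∀ u ∈ Subsemigroup.closure (Set.range ε), ∀ r ∈ 𝒜 0, u * r = r * u := by
  intro u hu
  induction hu using Subsemigroup.closure_induction with
  | mem x hx =>
    obtain ⟨g, rfl⟩ := hx
    intro r hr
    have := lemA 𝒜 ε hmem hunit 0 g hr
    rw [zero_add] at this
    exact this.symm
  | mul x y hx hy ihx ihy =>
    intro r hr
    rw [mul_assoc, ihy r hr, ← mul_assoc, ihx r hr, mul_assoc]

lemma lemB (ε : G → A)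
    (hmem : ∀ g : G, ε g ∈ 𝒜 g * 𝒜 (-g))
    (hunit : ∀ g : G, ∀ s ∈ 𝒜 g, ε g * s = s ∧ s * ε (-g) = s)
    (εG : A) (hlower : ∀ g : G, εG * ε g = εG) :
    ∀ x ∈ Subsemigroup.closure (Set.range ε), ∀ g : G, ∀ s ∈ 𝒜 g,
      (∃ T ∈ Subsemigroup.closure (Set.range ε), εG * T = εG ∧ s * x = T * s) ∧
      (∃ U ∈ Subsemigroup.closure (Set.range ε), εG * U = εG ∧ x * s = s * U) := by
  intro x hx
  induction hx using Subsemigroup.closure_induction with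
  | mem x hx =>
    obtain ⟨h, rfl⟩ := hx
    intro g s hs
    constructor
    · refine ⟨ε (g + h), Subsemigroup.subset_closure ⟨g + h, rfl⟩, hlower _, ?_⟩
      exact lemA 𝒜 ε hmem hunit g h hs
    · refine ⟨ε (-g + h), Subsemigroup.subset_closure ⟨-g + h, rfl⟩, hlower _, ?_⟩
      have := lemA 𝒜 ε hmem hunit g (-g + h) hs
      rw [add_neg_cancel_left] at this
      exact this.symm
  | mul x y hx hy ihx ihy =>
    intro g s hs
    obtain ⟨⟨T₁, hT₁c, hT₁e, hT₁⟩, ⟨U₁, hU₁c, hU₁e, hU₁⟩⟩ := ihx g s hs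
    obtain ⟨⟨T₂, hT₂c, hT₂e, hT₂⟩, ⟨U₂, hU₂c, hU₂e, hU₂⟩⟩ := ihy g s hs
    constructor
    · refine ⟨T₁ * T₂, mul_mem hT₁c hT₂c, by rw [← mul_assoc, hT₁e, hT₂e], ?_⟩
      rw [← mul_assoc, hT₁, mul_assoc, hT₂, ← mul_assoc]
    · refine ⟨U₁ * U₂, mul_mem hU₁c hU₂c, by rw [← mul_assoc, hU₁e, hU₂e], ?_⟩
      rw [mul_assoc, hU₂, ← mul_assoc, hU₁, mul_assoc]

end Aux

/-- If `ε_G = ⋀_g ε_g` is a nonzero element of the boolean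
semigroup `B(E_G)*`, then `ε_G S = ⊕_g ε_G S_g` is strongly `G`-graded. -/
theorem corner_strongly_graded_of_meet
    {G : Type} [AddGroup G] [DecidableEq G]
    {A : Type} [Ring A] (𝒜 : G → AddSubgroup A) [GradedRing 𝒜]
    (ε : G → A)
    (hmem : ∀ g : G, ε g ∈ 𝒜 g * 𝒜 (-g))
    (hunit : ∀ g : G, ∀ s ∈ 𝒜 g, ε g * s = s ∧ s * ε (-g) = s)
    (εG : A)
    (hB : εG ∈ Subsemigroup.closure (Set.range ε))
    (h0 : εG ≠ 0)
    (hlower : ∀ g : G, εG * ε g = εG)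
    (hinf : ∀ b ∈ Subsemigroup.closure (Set.range ε),
      (∀ g : G, b * ε g = b) → b * εG = b) :
    ∀ g h : G,
      cornerComponent εG (𝒜 g) * cornerComponent εG (𝒜 h)
        = cornerComponent εG (𝒜 (g + h)) := by
  
  intro g h
  have e0 : εG ∈ 𝒜 0 := closure_sub_zero 𝒜 ε hmem εG hB
  have idem : εG * εG = εG := hinf εG hB hlower
  have key : ∀ k : G, ∀ s ∈ 𝒜 k, εG * s = s * εG := by
    intro k s hs
    obtain ⟨⟨T, hTc, hTe, hT⟩, ⟨U, hUc, hUe, hU⟩⟩ :=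
      lemB 𝒜 ε hmem hunit εG hlower εG hB k s hs
    have h1 : εG * (s * εG) = εG * s := by rw [hT, ← mul_assoc, hTe]
    have h2 : εG * s * εG = s * εG := by
      rw [hU, mul_assoc, comm_zero 𝒜 ε hmem hunit U hUc εG e0, hUe]
    rw [← h2, mul_assoc, h1]
  apply le_antisymm
  · intro x hx
    refine aux_mul_induction hx (fun m hm n hn => ?_) (fun x y hx hy => add_mem hx hy)
    obtain ⟨a, ha, rfl⟩ := AddSubgroup.mem_map.mp hm
    obtain ⟨b, hb, rfl⟩ := AddSubgroup.mem_map.mp hn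
    refine AddSubgroup.mem_map.mpr ⟨a * εG * b, ?_, ?_⟩
    · have h1 : a * εG ∈ 𝒜 g := by
        have := SetLike.mul_mem_graded ha e0
        rwa [add_zero] at this
      exact SetLike.mul_mem_graded h1 hb
    · show εG * (a * εG * b) = εG * a * (εG * b)
      rw [mul_assoc a εG b, ← mul_assoc]
  · intro x hx
    obtain ⟨c, hc, rfl⟩ := AddSubgroup.mem_map.mp hx
    show εG * c ∈ _
    have key2 : ∀ x ∈ 𝒜 g * 𝒜 (-g),
        εG * x * (εG * c) ∈ cornerComponent εG (𝒜 g) * cornerComponent εG (𝒜 h) := by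
      intro x hx
      refine aux_mul_induction (C := fun y => εG * y * (εG * c) ∈ cornerComponent εG (𝒜 g) * cornerComponent εG (𝒜 h)) hx (fun a ha b hb => ?_) (fun x y ihx ihy => ?_)
      · show εG * (a * b) * (εG * c) ∈ cornerComponent εG (𝒜 g) * cornerComponent εG (𝒜 h)
        have hbc : b * c ∈ 𝒜 h := by
          have := SetLike.mul_mem_graded hb hc
          rwa [neg_add_cancel_left] at this
        have hcb : εG * b = b * εG := key (-g) b hb
        have heq : εG * (a * b) * (εG * c) = (εG * a) * (εG * (b * c)) := by
          calc εG * (a * b) * (εG * c) = εG * (a * (b * (εG * c))) := by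
                simp only [mul_assoc]
            _ = εG * (a * (εG * (b * c))) := by rw [← mul_assoc b, ← hcb, mul_assoc]
            _ = (εG * a) * (εG * (b * c)) := by rw [← mul_assoc]
        rw [heq]
        exact aux_mul_mem (AddSubgroup.mem_map.mpr ⟨a, ha, rfl⟩)
          (AddSubgroup.mem_map.mpr ⟨b * c, hbc, rfl⟩)
      · show εG * (x + y) * (εG * c) ∈ cornerComponent εG (𝒜 g) * cornerComponent εG (𝒜 h)
        have hd : εG * (x + y) * (εG * c) = εG * x * (εG * c) + εG * y * (εG * c) := by
          rw [mul_add, add_mul]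
        rw [hd]
        exact add_mem ihx ihy
    have hfin : εG * (ε g) * (εG * c) = εG * c := by
      rw [hlower, ← mul_assoc, idem]
    rw [← hfin]
    exact key2 _ (hmem g)
end Defs
end
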